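/- arXiv:0908.4440 — 8 statements merged into one kernel-verified Lean document; each statement's English description precedes it below -/
import Mathlib

section
/- For every rational number t, the discriminant expression (3 + 5t²)² - 4(2 - t²)(-6t² - 1) = t⁴ + 74t² + 17 is not the square of a rational number. -/
private lemma m13 : ∀ x y : ZMod 13, x^2 + 37*y^2 = 0 → y = 0 := by decide
private lemma z0 : ∀ C A B : ZMod 16, C^2 ≠ (2*A+1)^4 + 74*(2*A+1)^2*(2*B+1)^2 + 17*(2*B+1)^4 := by decide
private lemma z1 : ∀ F G H : ZMod 16, 4*F^2 ≠ 74*(2*G+1)^2*(2*H+1)^2 + 17*(2*G+1)^4 + (2*H+1)^4 := by decide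
private lemma z2 : ∀ F G H : ZMod 16, 4*F^2 ≠ 74*(2*G+1)^2*(2*H+1)^2 - 17*(2*G+1)^4 - (2*H+1)^4 := by decide
private lemma z3 : ∀ F G H : ZMod 16, (2*F+1)^2 ≠ 74*G^2*H^2 - 17*G^4 - H^4 := by decide
private lemma z4 : ∀ F G H : ZMod 16, 676*F^2 ≠ 74*(2*G+1)^2*(2*H+1)^2 + 17*(2*G+1)^4 + (2*H+1)^4 := by decide
private lemma z5 : ∀ F G H : ZMod 16, 676*F^2 ≠ 74*(2*G+1)^2*(2*H+1)^2 - 17*(2*G+1)^4 - (2*H+1)^4 := by decide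
private lemma z6 : ∀ F G H : ZMod 16, 169*(2*F+1)^2 ≠ 74*G^2*H^2 - 17*G^4 - H^4 := by decide

private lemma natAbs_lt_of_sq_lt {x y : ℤ} (h : x^2 < y^2) : x.natAbs < y.natAbs := by
  have h1 : x.natAbs^2 < y.natAbs^2 := by zify; simpa [sq_abs] using h
  exact lt_of_pow_lt_pow_left₀ 2 (Nat.zero_le _) h1

private lemma int_prime (p : ℕ) (hp : p.Prime) : Prime (p:ℤ) := Nat.prime_iff_prime_int.mp hp

private lemma chase17 (F1 F2 e : ℤ) (hkey : F1 * F2 = 17 * e^4)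
    (hstep : ∀ p : ℕ, p.Prime → ((p:ℤ) ∣ F1 + F2) → ((p:ℤ) ∣ e) → False) :
    IsCoprime F1 F2 := by
  rw [Int.isCoprime_iff_gcd_eq_one]
  by_contra hne
  obtain ⟨pp, hpp, hdvd⟩ := Nat.exists_prime_and_dvd hne
  have hP : Prime (pp:ℤ) := int_prime pp hpp
  have h1 : (pp:ℤ) ∣ F1 := (Int.natCast_dvd_natCast.mpr hdvd).trans (Int.gcd_dvd_left _ _)
  have h2 : (pp:ℤ) ∣ F2 := (Int.natCast_dvd_natCast.mpr hdvd).trans (Int.gcd_dvd_right _ _)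
  have hsum : (pp:ℤ) ∣ F1 + F2 := dvd_add h1 h2
  have hprod : (pp:ℤ) ∣ 17 * e^4 := hkey ▸ h1.mul_right F2
  rcases hP.dvd_mul.mp hprod with h17 | he4
  · have hpp17 : pp ∣ 17 := by exact_mod_cast h17
    have : pp = 17 := (Nat.prime_dvd_prime_iff_eq hpp (by norm_num)).mp hpp17
    subst this
    have hsq : (17:ℤ) * 17 ∣ 17 * e^4 := by
      have := mul_dvd_mul h1 h2
      rw [hkey] at this
      exact_mod_cast this
    obtain ⟨k, hk⟩ := hsq
    have h17e : (17:ℤ) ∣ e^4 := ⟨k, by linarith⟩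
    exact hstep 17 (by norm_num) hsum (hP.dvd_of_dvd_pow h17e)
  · exact hstep pp hpp hsum (hP.dvd_of_dvd_pow he4)

private lemma pin_pos {M m : ℤ} (hM : 0 < M) (h : M = m^2 ∨ M = -m^2) : M = m^2 := by
  rcases h with h' | h'
  · exact h'
  · nlinarith [sq_nonneg m]

/-- split u*v = 2*S^2 with u,v coprime positive -/
private lemma lemA (u v S : ℤ) (hu : 0 < u) (hv : 0 < v) (hcop : IsCoprime u v)
    (h : u * v = 2 * S^2) :
    ∃ m n : ℤ, IsCoprime m n ∧ u + v = 2*m^2 + n^2 ∧ m^2 * n^2 = S^2 := by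
  have h2 : (2:ℤ) ∣ u * v := ⟨S^2, h⟩
  rcases (Int.prime_two.dvd_mul.mp h2) with h2u | h2v
  · obtain ⟨M, rfl⟩ := h2u
    have hMv : M * v = S^2 :=
      mul_left_cancel₀ two_ne_zero (by linear_combination h : (2:ℤ) * (M * v) = 2 * S^2)
    have hcop' : IsCoprime M v := by
      obtain ⟨x, y, hxy⟩ := hcop
      exact ⟨x*2, y, by linear_combination hxy⟩
    have hMpos : 0 < M := by linarith
    obtain ⟨m, hm0⟩ := Int.sq_of_isCoprime hcop' hMv
    have hM := pin_pos hMpos hm0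
    obtain ⟨n, hn0⟩ := Int.sq_of_isCoprime hcop'.symm (by linear_combination hMv : v * M = S^2)
    have hV := pin_pos hv hn0
    refine ⟨m, n, ?_, by rw [hM, hV], by rw [← hM, ← hV]; linear_combination hMv⟩
    rw [hM, hV] at hcop'
    exact (IsCoprime.pow_left_iff two_pos).mp ((IsCoprime.pow_right_iff two_pos).mp hcop')
  · obtain ⟨M, rfl⟩ := h2v
    have hMu : M * u = S^2 :=
      mul_left_cancel₀ two_ne_zero (by linear_combination h : (2:ℤ) * (M * u) = 2 * S^2)
    have hcop' : IsCoprime M u := by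
      obtain ⟨x, y, hxy⟩ := hcop
      exact ⟨y*2, x, by linear_combination hxy⟩
    have hMpos : 0 < M := by linarith
    obtain ⟨m, hm0⟩ := Int.sq_of_isCoprime hcop' hMu
    have hM := pin_pos hMpos hm0
    obtain ⟨n, hn0⟩ := Int.sq_of_isCoprime hcop'.symm (by linear_combination hMu : u * M = S^2)
    have hV := pin_pos hu hn0
    refine ⟨m, n, ?_, by rw [hM, hV]; ring, by rw [← hM, ← hV]; linear_combination hMu⟩
    rw [hM, hV] at hcop'
    exact (IsCoprime.pow_left_iff two_pos).mp ((IsCoprime.pow_right_iff two_pos).mp hcop')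


private lemma sq_eq_of_nonneg {x y : ℤ} (hx : 0 ≤ x) (hy : 0 ≤ y) (h : x^2 = y^2) : x = y := by
  nlinarith [sq_nonneg (x - y), sq_nonneg (x + y)]

/-- from coprime m n with (m*n)^2 = e^4, extract 4th powers. -/
private lemma lemB2 (m n e : ℤ) (hcop : IsCoprime m n) (h : m^2 * n^2 = e^4) :
    ∃ g h' : ℤ, m^2 = g^4 ∧ n^2 = h'^4 ∧ IsCoprime g h' ∧ g^2 * h'^2 = e^2 := by
  have hmn : m * n = e^2 ∨ m * n = -e^2 := by
    rcases sq_eq_sq_iff_eq_or_eq_neg.mp (by linear_combination h : (m*n)^2 = (e^2)^2) with h'|h'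
    · exact Or.inl h'
    · exact Or.inr (by linarith)
  have main : ∀ m' : ℤ, IsCoprime m' n → m' * n = e^2 → m'^2 = m^2 →
      ∃ g h' : ℤ, m^2 = g^4 ∧ n^2 = h'^4 ∧ IsCoprime g h' ∧ g^2 * h'^2 = e^2 := by
    intro m' hc hme hsq
    obtain ⟨g, hg⟩ := Int.sq_of_isCoprime hc hme
    obtain ⟨h', hh⟩ := Int.sq_of_isCoprime hc.symm (by linear_combination hme : n * m' = e^2)
    have hm2 : m^2 = g^4 := by rcases hg with h''|h'' <;> nlinarith [hsq]
    have hn2 : n^2 = h'^4 := by rcases hh with h''|h'' <;> nlinarith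
    refine ⟨g, h', hm2, hn2, ?_, ?_⟩
    · have hcpow : IsCoprime (g^4) (h'^4) := by
        have := hc.pow (m := 2) (n := 2)
        rwa [hsq, hm2, hn2] at this
      exact (IsCoprime.pow_left_iff (by norm_num : 0 < 4)).mp
        ((IsCoprime.pow_right_iff (by norm_num : 0 < 4)).mp hcpow)
    · have h1 : (g^2*h'^2)^2 = (e^2)^2 := by
        have : m'^2 * n^2 = e^4 := by nlinarith [hsq]
        nlinarith [hm2, hn2, hsq]
      exact sq_eq_of_nonneg (by positivity) (sq_nonneg e) h1
  rcases hmn with h'|h'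
  · exact main m hcop h' rfl
  · exact main (-m) hcop.neg_left (by linear_combination -h') (by ring)

/-- positive-case core of lemB with 17 ∣ p -/
private lemma lemB1 (p q e : ℤ) (hp : 0 < p) (hq : 0 < q) (hcop : IsCoprime p q)
    (h : p * q = 17 * e^4) (h17 : (17:ℤ) ∣ p) :
    ∃ g h' : ℤ, IsCoprime g h' ∧ g^2 * h'^2 = e^2 ∧ p + q = 17*g^4 + h'^4 ∧ g ≠ 0 ∧ h' ≠ 0 := by
  obtain ⟨P, rfl⟩ := h17
  have hPq : P * q = e^4 :=
    mul_left_cancel₀ (by norm_num : (17:ℤ) ≠ 0) (by linear_combination h)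
  have hcop' : IsCoprime P q := by
    obtain ⟨x, y, hxy⟩ := hcop
    exact ⟨x*17, y, by linear_combination hxy⟩
  have hPpos : 0 < P := by nlinarith
  obtain ⟨m, hm0⟩ := Int.sq_of_isCoprime hcop' (by linear_combination hPq : P * q = (e^2)^2)
  have hP := pin_pos hPpos hm0
  obtain ⟨n, hn0⟩ := Int.sq_of_isCoprime hcop'.symm (by linear_combination hPq : q * P = (e^2)^2)
  have hQ := pin_pos hq hn0
  have hcopmn : IsCoprime m n := by
    rw [hP, hQ] at hcop'
    exact (IsCoprime.pow_left_iff two_pos).mp ((IsCoprime.pow_right_iff two_pos).mp hcop')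
  obtain ⟨g, h', hm2, hn2, hcopgh, hghe⟩ := lemB2 m n e hcopmn (by rw [← hP, ← hQ]; linear_combination hPq)
  refine ⟨g, h', hcopgh, hghe, by rw [hP, hQ, hm2, hn2], ?_, ?_⟩
  · rintro rfl; nlinarith [hP, hm2]
  · rintro rfl; nlinarith [hQ, hn2]

private lemma lemB (p q e : ℤ) (he : e ≠ 0) (hcop : IsCoprime p q) (h : p * q = 17 * e^4) :
    ∃ g h' : ℤ, g ≠ 0 ∧ h' ≠ 0 ∧ IsCoprime g h' ∧ g^2 * h'^2 = e^2 ∧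
      (p + q = 17*g^4 + h'^4 ∨ p + q = -(17*g^4 + h'^4)) := by
  have he4 : 0 < 17 * e^4 := by positivity
  have hpq : 0 < p * q := h ▸ he4
  have h17 : (17:ℤ) ∣ p * q := ⟨e^4, h⟩
  have hp17 : Prime (17:ℤ) := by norm_num
  rcases lt_trichotomy p 0 with hneg | hzero | hpos
  · have hqneg : q < 0 := by nlinarith
    have hcop' : IsCoprime (-p) (-q) := hcop.neg_left.neg_right
    have h' : (-p) * (-q) = 17 * e^4 := by linear_combination h
    rcases hp17.dvd_mul.mp (⟨e^4, h'⟩ : (17:ℤ) ∣ (-p) * (-q)) with hd | hd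
    · obtain ⟨g, h', a1, a2, a3, a4, a5⟩ := lemB1 (-p) (-q) e (by linarith) (by linarith) hcop' h' hd
      exact ⟨g, h', a4, a5, a1, a2, Or.inr (by linarith)⟩
    · obtain ⟨g, h', a1, a2, a3, a4, a5⟩ := lemB1 (-q) (-p) e (by linarith) (by linarith) hcop'.symm (by linear_combination h) hd
      exact ⟨g, h', a4, a5, a1, a2, Or.inr (by linarith)⟩
  · exfalso; rw [hzero] at hpq; simp at hpq
  · have hqpos : 0 < q := by nlinarith
    rcases hp17.dvd_mul.mp h17 with hd | hd
    · obtain ⟨g, h', a1, a2, a3, a4, a5⟩ := lemB1 p q e hpos hqpos hcop h hd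
      exact ⟨g, h', a4, a5, a1, a2, Or.inl a3⟩
    · obtain ⟨g, h', a1, a2, a3, a4, a5⟩ := lemB1 q p e hqpos hpos hcop.symm (by linear_combination h) hd
      exact ⟨g, h', a4, a5, a1, a2, Or.inl (by linarith)⟩

/-- Branch C1: a^2 = f^4 - 37 e^2 f^2 + 338 e^4 -/
private lemma branchC1 (a b e f : ℤ) (hb : b ≠ 0) (hab : IsCoprime a b) (hef : IsCoprime e f)
    (hb2 : b^2 = e^2 * f^2) (ha2 : a^2 = f^4 - 37*e^2*f^2 + 338*e^4)
    (IH : ∀ b' : ℤ, b'.natAbs < b.natAbs → ∀ a' c' : ℤ, b' ≠ 0 → IsCoprime a' b' →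
      c'^2 ≠ a'^4 + 74*a'^2*b'^2 + 17*b'^4) : False := by
  have he0 : e ≠ 0 := by rintro rfl; apply hb; nlinarith [hb2]
  have hf0 : f ≠ 0 := by rintro rfl; apply hb; nlinarith [hb2]
  rcases Int.even_or_odd e with heE | heO
  · -- e even
    obtain ⟨e₁, he1⟩ := heE
    subst he1
    have he₁0 : e₁ ≠ 0 := by rintro rfl; simp at he0
    have hf_odd : Odd f := by
      rcases Int.even_or_odd f with hfE | hfO
      · exact absurd (hef.isUnit_of_dvd' ⟨e₁, by ring⟩ hfE.two_dvd) (by decide)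
      · exact hfO
    have ha_odd : Odd a := by
      have hodd2 : Odd (a^2) := by
        rw [ha2]
        exact ((hf_odd.pow).sub_even ⟨74*e₁^2*f^2, by ring⟩).add_even ⟨2704*e₁^4, by ring⟩
      rcases Int.odd_pow.mp hodd2 with h|h
      · exact h
      · exact absurd h (by norm_num)
    have hY1_odd : Odd (f^2 - 74*e₁^2) := (hf_odd.pow).sub_even ⟨37*e₁^2, by ring⟩
    obtain ⟨p, hp⟩ := hY1_odd.sub_odd ha_odd
    have h4 : (4:ℤ) * (p * (f^2 - 74*e₁^2 - p)) = 4 * (17*e₁^4) := by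
      linear_combination (-1)*ha2 - (2*a + (f^2 - 74*e₁^2 - a - 2*p))*hp
    have hpq : p * (f^2 - 74*e₁^2 - p) = 17*e₁^4 :=
      mul_left_cancel₀ (by norm_num : (4:ℤ) ≠ 0) h4
    have hcop_pq : IsCoprime p (f^2 - 74*e₁^2 - p) := by
      apply chase17 _ _ _ hpq
      intro pp hpp hsum hpe1
      have hsum' : (pp:ℤ) ∣ f^2 - 74*e₁^2 := by
        rwa [show p + (f^2 - 74*e₁^2 - p) = f^2 - 74*e₁^2 by ring] at hsum
      have hf2 : (pp:ℤ) ∣ f^2 := by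
        have h74 : (pp:ℤ) ∣ 74*e₁^2 := Dvd.dvd.mul_left (dvd_pow hpe1 two_ne_zero) 74
        have := dvd_add hsum' h74
        rwa [show f^2 - 74*e₁^2 + 74*e₁^2 = f^2 by ring] at this
      have hpf : (pp:ℤ) ∣ f := (int_prime pp hpp).dvd_of_dvd_pow hf2
      have hpe : (pp:ℤ) ∣ e₁ + e₁ := dvd_add hpe1 hpe1
      exact (int_prime pp hpp).not_unit (hef.isUnit_of_dvd' hpe hpf)
    obtain ⟨g, h', hg0, hh0, hcopgh, hghe, hor⟩ := lemB _ _ _ he₁0 hcop_pq hpq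
    rcases hor with hs | hs
    · -- descent
      have hsum_eq : f^2 - 74*e₁^2 = 17*g^4 + h'^4 := by linear_combination hs
      have final : f^2 = h'^4 + 74*h'^2*g^2 + 17*g^4 := by
        linear_combination hsum_eq - 74*hghe
      have hh1 : 1 ≤ h'^2 := by rcases hh0.lt_or_gt with h|h <;> nlinarith
      have hf1 : 1 ≤ f^2 := by rcases hf0.lt_or_gt with h|h <;> nlinarith
      have he11 : 1 ≤ e₁^2 := by rcases he₁0.lt_or_gt with h|h <;> nlinarith
      have hlt : g^2 < b^2 := by nlinarith [hghe, hb2, sq_nonneg g]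
      exact IH g (natAbs_lt_of_sq_lt hlt) h' f hg0 hcopgh.symm final
    · have hsum_eq : f^2 - 74*e₁^2 = -(17*g^4 + h'^4) := by linear_combination hs
      obtain ⟨F, hF⟩ := hf_odd
      have final : (2*F+1)^2 = 74*g^2*h'^2 - 17*g^4 - h'^4 := by
        rw [← hF]; linear_combination hsum_eq - 74*hghe
      have hz := congrArg (fun z : ℤ => (z : ZMod 16)) final
      push_cast at hz
      exact z3 _ _ _ hz
  · -- e odd
    have key : (2*f^2 - 37*e^2 - 2*a) * (2*f^2 - 37*e^2 + 2*a) = 17*e^4 := by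
      linear_combination (-4)*ha2
    have hcop_pq : IsCoprime (2*f^2 - 37*e^2 - 2*a) (2*f^2 - 37*e^2 + 2*a) := by
      apply chase17 _ _ _ key
      intro pp hpp hsum hpe
      have hsum' : (pp:ℤ) ∣ 4*f^2 - 74*e^2 := by
        rwa [show (2*f^2 - 37*e^2 - 2*a) + (2*f^2 - 37*e^2 + 2*a) = 4*f^2 - 74*e^2 by ring] at hsum
      have h4f : (pp:ℤ) ∣ 4*f^2 := by
        have h74 : (pp:ℤ) ∣ 74*e^2 := Dvd.dvd.mul_left (dvd_pow hpe two_ne_zero) 74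
        have := dvd_add hsum' h74
        rwa [show 4*f^2 - 74*e^2 + 74*e^2 = 4*f^2 by ring] at this
      have hP := int_prime pp hpp
      rcases hP.dvd_mul.mp h4f with h4 | hf2
      · have : pp ∣ 4 := by exact_mod_cast h4
        have hpp2 : pp = 2 := by
          rcases (Nat.Prime.dvd_mul hpp).mp (show pp ∣ 2*2 from this) with h|h <;>
            exact (Nat.prime_dvd_prime_iff_eq hpp (by norm_num)).mp h
        rw [hpp2] at hpe
        have hpe' : (2:ℤ) ∣ e := by exact_mod_cast hpe
        obtain ⟨k, hk⟩ := hpe'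
        exact (Int.not_odd_iff_even.mpr ⟨k, by omega⟩) heO
      · have hpf : (pp:ℤ) ∣ f := hP.dvd_of_dvd_pow hf2
        exact hP.not_unit (hef.isUnit_of_dvd' hpe hpf)
    obtain ⟨g, h', hg0, hh0, hcopgh, hghe, hor⟩ := lemB _ _ _ he0 hcop_pq key
    have hg_odd : Odd g := by
      rcases Int.even_or_odd g with hEv|hOd
      · exfalso
        have h2 : (2:ℤ) ∣ e^2 := by
          rw [← hghe]; exact dvd_mul_of_dvd_left (dvd_pow hEv.two_dvd two_ne_zero) _
        obtain ⟨k, hk⟩ := h2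
        exact (Int.not_odd_iff_even.mpr (⟨k, by linarith⟩ : Even (e^2))) heO.pow
      · exact hOd
    have hh_odd : Odd h' := by
      rcases Int.even_or_odd h' with hEv|hOd
      · exfalso
        have h2 : (2:ℤ) ∣ e^2 := by
          rw [← hghe]; exact dvd_mul_of_dvd_right (dvd_pow hEv.two_dvd two_ne_zero) _
        obtain ⟨k, hk⟩ := h2
        exact (Int.not_odd_iff_even.mpr (⟨k, by linarith⟩ : Even (e^2))) heO.pow
      · exact hOd
    obtain ⟨G, hG⟩ := hg_odd
    obtain ⟨H, hH⟩ := hh_odd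
    rcases hor with hs | hs
    · have hs1 : 4*f^2 - 74*e^2 = 17*g^4 + h'^4 := by linear_combination hs
      have final : 4*f^2 = 74*(2*G+1)^2*(2*H+1)^2 + 17*(2*G+1)^4 + (2*H+1)^4 := by
        rw [← hG, ← hH]; linear_combination hs1 - 74*hghe
      have hz := congrArg (fun z : ℤ => (z : ZMod 16)) final
      push_cast at hz
      exact z1 _ _ _ hz
    · have hs2 : 4*f^2 - 74*e^2 = -(17*g^4 + h'^4) := by linear_combination hs
      have final : 4*f^2 = 74*(2*G+1)^2*(2*H+1)^2 - 17*(2*G+1)^4 - (2*H+1)^4 := by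
        rw [← hG, ← hH]; linear_combination hs2 - 74*hghe
      have hz := congrArg (fun z : ℤ => (z : ZMod 16)) final
      push_cast at hz
      exact z2 _ _ _ hz

/-- Branch C2: a^2 = 2 e^4 - 37 e^2 f^2 + 169 f^4 -/
private lemma branchC2 (a b e f : ℤ) (hb : b ≠ 0) (hab : IsCoprime a b) (hef : IsCoprime e f)
    (hb2 : b^2 = e^2 * f^2) (ha2 : a^2 = 2*e^4 - 37*e^2*f^2 + 169*f^4)
    (IH : ∀ b' : ℤ, b'.natAbs < b.natAbs → ∀ a' c' : ℤ, b' ≠ 0 → IsCoprime a' b' →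
      c'^2 ≠ a'^4 + 74*a'^2*b'^2 + 17*b'^4) : False := by
  have he0 : e ≠ 0 := by rintro rfl; apply hb; nlinarith [hb2]
  have hf0 : f ≠ 0 := by rintro rfl; apply hb; nlinarith [hb2]
  have h13e : ¬ (13:ℤ) ∣ e := by
    rintro ⟨k, hk⟩
    have h13a : (13:ℤ) ∣ a := by
      apply (by norm_num : Prime (13:ℤ)).dvd_of_dvd_pow (n := 2)
      exact ⟨2*13^3*k^4 - 37*13*k^2*f^2 + 13*f^4, by rw [ha2, hk]; ring⟩
    have h13b : (13:ℤ) ∣ b := by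
      apply (by norm_num : Prime (13:ℤ)).dvd_of_dvd_pow (n := 2)
      exact ⟨13*k^2*f^2, by rw [hb2, hk]; ring⟩
    exact (by decide : ¬ IsUnit (13:ℤ)) (hab.isUnit_of_dvd' h13a h13b)
  rcases Int.even_or_odd e with heE | heO
  · -- e even
    obtain ⟨e₁, he1⟩ := heE
    subst he1
    have he₁0 : e₁ ≠ 0 := by rintro rfl; simp at he0
    have hf_odd : Odd f := by
      rcases Int.even_or_odd f with hfE | hfO
      · exact absurd (hef.isUnit_of_dvd' ⟨e₁, by ring⟩ hfE.two_dvd) (by decide)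
      · exact hfO
    have ha_odd : Odd a := by
      have hodd2 : Odd (a^2) := by
        rw [ha2, show 2*(e₁+e₁)^4 - 37*(e₁+e₁)^2*f^2 + 169*f^4
            = 169*f^4 - (37*(e₁+e₁)^2*f^2 - 2*(e₁+e₁)^4) by ring]
        exact ((by decide : Odd (169:ℤ)).mul hf_odd.pow).sub_even
          ⟨74*e₁^2*f^2 - 16*e₁^4, by ring⟩
      rcases Int.odd_pow.mp hodd2 with h|h
      · exact h
      · exact absurd h (by norm_num)
    have hW1_odd : Odd (169*f^2 - 74*e₁^2) :=
      ((by decide : Odd (169:ℤ)).mul hf_odd.pow).sub_even ⟨37*e₁^2, by ring⟩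
    obtain ⟨p, hp⟩ := hW1_odd.sub_odd ((by decide : Odd (13:ℤ)).mul ha_odd)
    have h4 : (4:ℤ) * (p * (169*f^2 - 74*e₁^2 - p)) = 4 * (17*e₁^4) := by
      linear_combination (-169)*ha2 - (26*a + (169*f^2 - 74*e₁^2 - 13*a - 2*p))*hp
    have hpq : p * (169*f^2 - 74*e₁^2 - p) = 17*e₁^4 :=
      mul_left_cancel₀ (by norm_num : (4:ℤ) ≠ 0) h4
    have hcop_pq : IsCoprime p (169*f^2 - 74*e₁^2 - p) := by
      apply chase17 _ _ _ hpq
      intro pp hpp hsum hpe1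
      have hsum' : (pp:ℤ) ∣ 169*f^2 - 74*e₁^2 := by
        rwa [show p + (169*f^2 - 74*e₁^2 - p) = 169*f^2 - 74*e₁^2 by ring] at hsum
      have hf2 : (pp:ℤ) ∣ 169*f^2 := by
        have h74 : (pp:ℤ) ∣ 74*e₁^2 := Dvd.dvd.mul_left (dvd_pow hpe1 two_ne_zero) 74
        have := dvd_add hsum' h74
        rwa [show 169*f^2 - 74*e₁^2 + 74*e₁^2 = 169*f^2 by ring] at this
      have hP := int_prime pp hpp
      rcases hP.dvd_mul.mp hf2 with h169 | hff
      · have : pp ∣ 169 := by exact_mod_cast h169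
        have hpp13 : pp = 13 := by
          rcases (Nat.Prime.dvd_mul hpp).mp (show pp ∣ 13*13 from this) with h|h <;>
            exact (Nat.prime_dvd_prime_iff_eq hpp (by norm_num)).mp h
        rw [hpp13] at hpe1
        exact h13e (by exact_mod_cast dvd_add hpe1 hpe1)
      · have hpf : (pp:ℤ) ∣ f := hP.dvd_of_dvd_pow hff
        have hpe : (pp:ℤ) ∣ e₁ + e₁ := dvd_add hpe1 hpe1
        exact hP.not_unit (hef.isUnit_of_dvd' hpe hpf)
    obtain ⟨g, h', hg0, hh0, hcopgh, hghe, hor⟩ := lemB _ _ _ he₁0 hcop_pq hpq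
    rcases hor with hs | hs
    · -- descent
      have hsum_eq : 169*f^2 - 74*e₁^2 = 17*g^4 + h'^4 := by linear_combination hs
      have final : (13*f)^2 = h'^4 + 74*h'^2*g^2 + 17*g^4 := by
        linear_combination hsum_eq - 74*hghe
      have hh1 : 1 ≤ h'^2 := by rcases hh0.lt_or_gt with h|h <;> nlinarith
      have hf1 : 1 ≤ f^2 := by rcases hf0.lt_or_gt with h|h <;> nlinarith
      have he11 : 1 ≤ e₁^2 := by rcases he₁0.lt_or_gt with h|h <;> nlinarith
      have hlt : g^2 < b^2 := by nlinarith [hghe, hb2, sq_nonneg g]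
      exact IH g (natAbs_lt_of_sq_lt hlt) h' (13*f) hg0 hcopgh.symm final
    · have hsum_eq : 169*f^2 - 74*e₁^2 = -(17*g^4 + h'^4) := by linear_combination hs
      obtain ⟨F, hF⟩ := hf_odd
      have final : 169*(2*F+1)^2 = 74*g^2*h'^2 - 17*g^4 - h'^4 := by
        rw [← hF]; linear_combination hsum_eq - 74*hghe
      have hz := congrArg (fun z : ℤ => (z : ZMod 16)) final
      push_cast at hz
      exact z6 _ _ _ hz
  · -- e odd
    have key : (338*f^2 - 37*e^2 - 26*a) * (338*f^2 - 37*e^2 + 26*a) = 17*e^4 := by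
      linear_combination (-676)*ha2
    have hcop_pq : IsCoprime (338*f^2 - 37*e^2 - 26*a) (338*f^2 - 37*e^2 + 26*a) := by
      apply chase17 _ _ _ key
      intro pp hpp hsum hpe
      have hsum' : (pp:ℤ) ∣ 676*f^2 - 74*e^2 := by
        rwa [show (338*f^2 - 37*e^2 - 26*a) + (338*f^2 - 37*e^2 + 26*a)
          = 676*f^2 - 74*e^2 by ring] at hsum
      have h4f : (pp:ℤ) ∣ 676*f^2 := by
        have h74 : (pp:ℤ) ∣ 74*e^2 := Dvd.dvd.mul_left (dvd_pow hpe two_ne_zero) 74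
        have := dvd_add hsum' h74
        rwa [show 676*f^2 - 74*e^2 + 74*e^2 = 676*f^2 by ring] at this
      have hP := int_prime pp hpp
      rcases hP.dvd_mul.mp h4f with h676 | hff
      · have h676' : pp ∣ 676 := by exact_mod_cast h676
        rcases (Nat.Prime.dvd_mul hpp).mp (show pp ∣ 4*169 from h676') with h|h
        · have hpp2 : pp = 2 := by
            rcases (Nat.Prime.dvd_mul hpp).mp (show pp ∣ 2*2 from h) with h'|h' <;>
              exact (Nat.prime_dvd_prime_iff_eq hpp (by norm_num)).mp h'
          rw [hpp2] at hpe
          have hpe' : (2:ℤ) ∣ e := by exact_mod_cast hpe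
          obtain ⟨k, hk⟩ := hpe'
          exact (Int.not_odd_iff_even.mpr ⟨k, by omega⟩) heO
        · have hpp13 : pp = 13 := by
            rcases (Nat.Prime.dvd_mul hpp).mp (show pp ∣ 13*13 from h) with h'|h' <;>
              exact (Nat.prime_dvd_prime_iff_eq hpp (by norm_num)).mp h'
          rw [hpp13] at hpe
          exact h13e (by exact_mod_cast hpe)
      · have hpf : (pp:ℤ) ∣ f := hP.dvd_of_dvd_pow hff
        exact hP.not_unit (hef.isUnit_of_dvd' hpe hpf)
    obtain ⟨g, h', hg0, hh0, hcopgh, hghe, hor⟩ := lemB _ _ _ he0 hcop_pq key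
    have hg_odd : Odd g := by
      rcases Int.even_or_odd g with hEv|hOd
      · exfalso
        have h2 : (2:ℤ) ∣ e^2 := by
          rw [← hghe]; exact dvd_mul_of_dvd_left (dvd_pow hEv.two_dvd two_ne_zero) _
        obtain ⟨k, hk⟩ := h2
        exact (Int.not_odd_iff_even.mpr (⟨k, by linarith⟩ : Even (e^2))) heO.pow
      · exact hOd
    have hh_odd : Odd h' := by
      rcases Int.even_or_odd h' with hEv|hOd
      · exfalso
        have h2 : (2:ℤ) ∣ e^2 := by
          rw [← hghe]; exact dvd_mul_of_dvd_right (dvd_pow hEv.two_dvd two_ne_zero) _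
        obtain ⟨k, hk⟩ := h2
        exact (Int.not_odd_iff_even.mpr (⟨k, by linarith⟩ : Even (e^2))) heO.pow
      · exact hOd
    obtain ⟨G, hG⟩ := hg_odd
    obtain ⟨H, hH⟩ := hh_odd
    rcases hor with hs | hs
    · have hs1 : 676*f^2 - 74*e^2 = 17*g^4 + h'^4 := by linear_combination hs
      have final : 676*f^2 = 74*(2*G+1)^2*(2*H+1)^2 + 17*(2*G+1)^4 + (2*H+1)^4 := by
        rw [← hG, ← hH]; linear_combination hs1 - 74*hghe
      have hz := congrArg (fun z : ℤ => (z : ZMod 16)) final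
      push_cast at hz
      exact z4 _ _ _ hz
    · have hs2 : 676*f^2 - 74*e^2 = -(17*g^4 + h'^4) := by linear_combination hs
      have final : 676*f^2 = 74*(2*G+1)^2*(2*H+1)^2 - 17*(2*G+1)^4 - (2*H+1)^4 := by
        rw [← hG, ← hH]; linear_combination hs2 - 74*hghe
      have hz := congrArg (fun z : ℤ => (z : ZMod 16)) final
      push_cast at hz
      exact z5 _ _ _ hz

private lemma noSolAux : ∀ (N : ℕ) (a b c : ℤ), b.natAbs = N → b ≠ 0 → IsCoprime a b →
    c ^ 2 ≠ a^4 + 74*a^2*b^2 + 17*b^4 := by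
  intro N
  induction N using Nat.strong_induction_on with
  | _ N IH =>
    intro a b c hN hb hab heq
    subst hN
    have IH' : ∀ b' : ℤ, b'.natAbs < b.natAbs → ∀ a' c' : ℤ, b' ≠ 0 → IsCoprime a' b' →
        c'^2 ≠ a'^4 + 74*a'^2*b'^2 + 17*b'^4 := fun b' hlt a' c' hb' hab' =>
      IH b'.natAbs hlt a' b' c' rfl hb' hab'
    -- parity analysis
    have hXodd : Odd (a^2 + 37*b^2) := by
      rcases Int.even_or_odd a with haE|haO <;> rcases Int.even_or_odd b with hbE|hbO
      · exact absurd (hab.isUnit_of_dvd' haE.two_dvd hbE.two_dvd) (by decide)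
      · obtain ⟨A, hA⟩ := haE; obtain ⟨B, hB⟩ := hbO
        exact ⟨2*A^2 + 74*B^2 + 74*B + 18, by rw [hA, hB]; ring⟩
      · obtain ⟨A, hA⟩ := haO; obtain ⟨B, hB⟩ := hbE
        exact ⟨2*A^2 + 2*A + 74*B^2, by rw [hA, hB]; ring⟩
      · exfalso
        obtain ⟨A, hA⟩ := haO; obtain ⟨B, hB⟩ := hbO
        have final : c^2 = (2*A+1)^4 + 74*(2*A+1)^2*(2*B+1)^2 + 17*(2*B+1)^4 := by
          rw [← hA, ← hB]; exact heq
        have hz := congrArg (fun z : ℤ => (z : ZMod 16)) final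
        push_cast at hz
        exact z0 _ _ _ hz
    have hb2pos : 0 < b^2 := by rcases hb.lt_or_gt with h|h <;> nlinarith
    have hb4pos : 0 < b^4 := by nlinarith
    have hc2 : c^2 = (a^2+37*b^2)^2 - 1352*b^4 := by linear_combination heq
    have hXpos : 0 < a^2 + 37*b^2 := by nlinarith [sq_nonneg a]
    have hcodd : Odd c := by
      have hodd2 : Odd (c^2) := by
        rw [hc2]; exact (hXodd.pow).sub_even ⟨676*b^4, by ring⟩
      rcases Int.odd_pow.mp hodd2 with h|h
      · exact h
      · exact absurd h (by norm_num)
    obtain ⟨u, hu⟩ := hXodd.sub_odd hcodd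
    have hcX : c^2 < (a^2+37*b^2)^2 := by nlinarith
    have hclt : c < a^2+37*b^2 := by nlinarith
    have hcgt : -(a^2+37*b^2) < c := by nlinarith
    have hupos : 0 < u := by linarith
    have hvpos : 0 < a^2 + 37*b^2 - u := by linarith
    have huv : u * (a^2 + 37*b^2 - u) = 338 * b^4 := by
      have h4 : (4:ℤ)*(u * (a^2 + 37*b^2 - u)) = 4*(338*b^4) := by
        linear_combination (-1)*hc2 - (2*c + (a^2+37*b^2 - c - 2*u))*hu
      exact mul_left_cancel₀ (by norm_num : (4:ℤ) ≠ 0) h4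
    have hcop_uv : IsCoprime u (a^2 + 37*b^2 - u) := by
      rw [Int.isCoprime_iff_gcd_eq_one]
      by_contra hne
      obtain ⟨pp, hpp, hdvd⟩ := Nat.exists_prime_and_dvd hne
      have hP := int_prime pp hpp
      have h1 : (pp:ℤ) ∣ u := (Int.natCast_dvd_natCast.mpr hdvd).trans (Int.gcd_dvd_left _ _)
      have h2 : (pp:ℤ) ∣ a^2 + 37*b^2 - u :=
        (Int.natCast_dvd_natCast.mpr hdvd).trans (Int.gcd_dvd_right _ _)
      have hX : (pp:ℤ) ∣ a^2 + 37*b^2 := by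
        have := dvd_add h1 h2
        rwa [show u + (a^2+37*b^2-u) = a^2+37*b^2 by ring] at this
      have hppne2 : pp ≠ 2 := by
        rintro rfl
        have : (2:ℤ) ∣ a^2+37*b^2 := by exact_mod_cast hX
        obtain ⟨k, hk⟩ := this
        exact (Int.not_odd_iff_even.mpr (⟨k, by linarith⟩ : Even (a^2+37*b^2))) hXodd
      have hbpath : ¬ (pp:ℤ) ∣ b := by
        intro hpb
        have ha2dvd : (pp:ℤ) ∣ a^2 := by
          have h37 : (pp:ℤ) ∣ 37*b^2 := Dvd.dvd.mul_left (dvd_pow hpb two_ne_zero) 37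
          have := dvd_sub hX h37
          rwa [show a^2+37*b^2 - 37*b^2 = a^2 by ring] at this
        exact hP.not_unit (hab.isUnit_of_dvd' (hP.dvd_of_dvd_pow ha2dvd) hpb)
      have hprod : (pp:ℤ) ∣ 338 * b^4 := huv ▸ h1.mul_right _
      rcases hP.dvd_mul.mp hprod with h338 | hb4
      · have h338' : pp ∣ 338 := by exact_mod_cast h338
        rcases (Nat.Prime.dvd_mul hpp).mp (show pp ∣ 2*169 from h338') with h'|h'
        · exact hppne2 ((Nat.prime_dvd_prime_iff_eq hpp (by norm_num)).mp h')
        · have hpp13 : pp = 13 := by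
            rcases (Nat.Prime.dvd_mul hpp).mp (show pp ∣ 13*13 from h') with h''|h'' <;>
              exact (Nat.prime_dvd_prime_iff_eq hpp (by norm_num)).mp h''
          rw [hpp13] at hX
          have hz : ((a:ZMod 13))^2 + 37*((b:ZMod 13))^2 = 0 := by
            have h0 := (ZMod.intCast_zmod_eq_zero_iff_dvd (a^2+37*b^2) 13).mpr
              (by exact_mod_cast hX)
            push_cast at h0
            linear_combination h0
          have hb0 : ((b:ZMod 13)) = 0 := m13 _ _ hz
          have : (13:ℤ) ∣ b := (ZMod.intCast_zmod_eq_zero_iff_dvd b 13).mp hb0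
          rw [hpp13] at hbpath
          exact hbpath (by exact_mod_cast this)
      · exact hbpath (hP.dvd_of_dvd_pow hb4)
    obtain ⟨m, n, hcopmn, hsum, hprod2⟩ := lemA u (a^2+37*b^2-u) (13*b^2) hupos hvpos hcop_uv
      (by linear_combination huv)
    have hX2 : a^2 + 37*b^2 = 2*m^2 + n^2 := by linear_combination hsum
    have h13mn : (13:ℤ) ∣ m * n := by
      apply (by norm_num : Prime (13:ℤ)).dvd_of_dvd_pow (n := 2)
      exact ⟨13*b^4, by linear_combination hprod2⟩
    rcases (by norm_num : Prime (13:ℤ)).dvd_mul.mp h13mn with h13 | h13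
    · obtain ⟨m₁, rfl⟩ := h13
      have hm1n : (m₁*n)^2 = (b^2)^2 := by
        have h169 : (169:ℤ)*((m₁*n)^2) = 169*((b^2)^2) := by linear_combination hprod2
        exact mul_left_cancel₀ (by norm_num : (169:ℤ) ≠ 0) h169
      have hcop' : IsCoprime m₁ n := by
        obtain ⟨x, y, hxy⟩ := hcopmn
        exact ⟨x*13, y, by linear_combination hxy⟩
      obtain ⟨eE, fF, hm14, hn4, hcopef, hef2⟩ := lemB2 m₁ n b hcop'
        (by linear_combination hm1n)
      have ha2' : a^2 = fF^4 - 37*eE^2*fF^2 + 338*eE^4 := by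
        linear_combination hX2 + 338*hm14 + hn4 + 37*hef2
      exact branchC1 a b eE fF hb hab hcopef hef2.symm ha2' IH'
    · obtain ⟨n₁, rfl⟩ := h13
      have hm1n : (m*n₁)^2 = (b^2)^2 := by
        have h169 : (169:ℤ)*((m*n₁)^2) = 169*((b^2)^2) := by linear_combination hprod2
        exact mul_left_cancel₀ (by norm_num : (169:ℤ) ≠ 0) h169
      have hcop' : IsCoprime m n₁ := by
        obtain ⟨x, y, hxy⟩ := hcopmn
        exact ⟨x, y*13, by linear_combination hxy⟩
      obtain ⟨eE, fF, hm14, hn4, hcopef, hef2⟩ := lemB2 m n₁ b hcop'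
        (by linear_combination hm1n)
      have ha2' : a^2 = 2*eE^4 - 37*eE^2*fF^2 + 169*fF^4 := by
        linear_combination hX2 + 2*hm14 + 169*hn4 + 37*hef2
      exact branchC2 a b eE fF hb hab hcopef hef2.symm ha2' IH'

theorem stmt_0 (t : ℚ) :
    (3 + 5 * t ^ 2) ^ 2 - 4 * (2 - t ^ 2) * (-6 * t ^ 2 - 1) = t ^ 4 + 74 * t ^ 2 + 17 ∧
    ¬∃ w : ℚ, w ^ 2 = t ^ 4 + 74 * t ^ 2 + 17 := by
  refine ⟨by ring, ?_⟩
  rintro ⟨w, hw⟩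
  have hd0 : ((t.den:ℚ)) ≠ 0 := by
    exact_mod_cast t.den_nz
  have hnum : (t.num:ℚ) = t * t.den := (div_eq_iff hd0).mp (Rat.num_div_den t)
  have key : (w*(t.den:ℚ)^2)^2
      = (t.num:ℚ)^4 + 74*(t.num:ℚ)^2*(t.den:ℚ)^2 + 17*(t.den:ℚ)^4 := by
    rw [hnum]; linear_combination ((t.den:ℚ)^4)*hw
  have key2 : (w*(t.den:ℚ)^2)^2
      = ((t.num^4 + 74*t.num^2*(t.den:ℤ)^2 + 17*(t.den:ℤ)^4 : ℤ) : ℚ) := by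
    push_cast; exact key
  set W : ℚ := w*(t.den:ℚ)^2 with hWdef
  have hden : W.den = 1 := by
    have h1 : (W^2).den = 1 := by rw [key2]; exact Rat.den_intCast _
    have h2 : (W^2).den = W.den^2 := Rat.den_pow W 2
    have hpos : 0 < W.den := W.pos
    by_contra hne
    have : 2 ≤ W.den := by omega
    nlinarith [h2 ▸ h1]
  have hW : ((W.num:ℚ)) = W := Rat.coe_int_num_of_den_eq_one hden
  have hZ : (W.num)^2 = t.num^4 + 74*t.num^2*(t.den:ℤ)^2 + 17*(t.den:ℤ)^4 := by
    have hk := key2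
    rw [← hW] at hk
    exact_mod_cast hk
  refine noSolAux ((t.den:ℤ)).natAbs t.num (t.den:ℤ) W.num rfl ?_ ?_ hZ
  · exact_mod_cast t.den_nz
  · rw [Int.isCoprime_iff_gcd_eq_one]
    simpa [Int.gcd, Int.natAbs_natCast] using t.reduced
end

section
/- For every rational number t, the product (-6t² - 1)(2 - t²) is not the square of a rational number. -/
lemma odd_sq8 (n : ℤ) (h : Odd n) : ((n : ZMod 8)) ^ 2 = 1 := by
  obtain ⟨k, rfl⟩ := h
  have : ∀ x : ZMod 8, (2 * x + 1) ^ 2 = 1 := by decide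
  push_cast
  exact this _

lemma zmod8_key : ∀ α β μ ν : ZMod 8, (α ^ 2 = 1 ∨ β ^ 2 = 1) →
    6 * α ^ 2 + β ^ 2 = μ ^ 2 → α ^ 2 - 2 * β ^ 2 = ν ^ 2 → False := by decide

lemma zmod13_key : ∀ α β : ZMod 13, α ^ 2 = 2 * β ^ 2 → α = 0 ∧ β = 0 := by decide

lemma main_int (a b c : ℤ) (hb : 0 < b) (hcop : IsCoprime a b)
    (h : c ^ 2 = (6 * a ^ 2 + b ^ 2) * (a ^ 2 - 2 * b ^ 2)) : False := by
  have hbne : b ≠ 0 := hb.ne'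
  have not_unit_two : ¬ IsUnit (2 : ℤ) := by
    rw [Int.isUnit_iff]; omega
  have not_unit_13 : ¬ IsUnit (13 : ℤ) := by
    rw [Int.isUnit_iff]; omega
  have hX : 0 < 6 * a ^ 2 + b ^ 2 := by positivity
  -- Y ≠ 0
  have hYne : a ^ 2 - 2 * b ^ 2 ≠ 0 := by
    intro h0
    have h2a : (2 : ℤ) ∣ a := by
      have : (2 : ℤ) ∣ a ^ 2 := ⟨b ^ 2, by linarith⟩
      exact Int.prime_two.dvd_of_dvd_pow this
    obtain ⟨a', rfl⟩ := h2a
    have h2b : (2 : ℤ) ∣ b := by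
      have : (2 : ℤ) ∣ b ^ 2 := ⟨a' ^ 2, by nlinarith⟩
      exact Int.prime_two.dvd_of_dvd_pow this
    exact not_unit_two (hcop.isUnit_of_dvd' ⟨a', rfl⟩ h2b)
  have hY : 0 < a ^ 2 - 2 * b ^ 2 := by
    rcases lt_trichotomy (a ^ 2 - 2 * b ^ 2) 0 with h' | h' | h'
    · nlinarith [sq_nonneg c]
    · exact absurd h' hYne
    · exact h'
  -- coprimality of the two factors
  have hco2 : IsCoprime (6 * a ^ 2 + b ^ 2) (a ^ 2 - 2 * b ^ 2) := by
    rw [Int.isCoprime_iff_gcd_eq_one]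
    by_contra hg
    obtain ⟨p, hp, hpd⟩ := Nat.exists_prime_and_dvd hg
    have hpX : (p : ℤ) ∣ 6 * a ^ 2 + b ^ 2 :=
      dvd_trans (Int.natCast_dvd_natCast.mpr hpd) (Int.gcd_dvd_left _ _)
    have hpY : (p : ℤ) ∣ a ^ 2 - 2 * b ^ 2 :=
      dvd_trans (Int.natCast_dvd_natCast.mpr hpd) (Int.gcd_dvd_right _ _)
    have hpA : (p : ℤ) ∣ 13 * a ^ 2 := by
      have : (13 : ℤ) * a ^ 2 = 2 * (6 * a ^ 2 + b ^ 2) + (a ^ 2 - 2 * b ^ 2) := by ring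
      rw [this]; exact dvd_add (Dvd.dvd.mul_left hpX 2) hpY
    have hpB : (p : ℤ) ∣ 13 * b ^ 2 := by
      have : (13 : ℤ) * b ^ 2 = (6 * a ^ 2 + b ^ 2) - 6 * (a ^ 2 - 2 * b ^ 2) := by ring
      rw [this]; exact dvd_sub hpX (Dvd.dvd.mul_left hpY 6)
    have hpp : Prime (p : ℤ) := Int.prime_iff_natAbs_prime.mpr (by simpa using hp)
    by_cases h13 : p = 13
    · -- p = 13 : use quadratic nonresidue 2 mod 13
      subst h13
      have h13Y : ((13 : ℤ)) ∣ a ^ 2 - 2 * b ^ 2 := by exact_mod_cast hpY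
      have hz : ((a : ZMod 13)) ^ 2 = 2 * (b : ZMod 13) ^ 2 := by
        have := (ZMod.intCast_zmod_eq_zero_iff_dvd (a ^ 2 - 2 * b ^ 2) 13).mpr h13Y
        push_cast at this
        linear_combination this
      obtain ⟨ha0, hb0⟩ := zmod13_key _ _ hz
      have h13a : (13 : ℤ) ∣ a := by
        exact_mod_cast (ZMod.intCast_zmod_eq_zero_iff_dvd a 13).mp ha0
      have h13b : (13 : ℤ) ∣ b := by
        exact_mod_cast (ZMod.intCast_zmod_eq_zero_iff_dvd b 13).mp hb0
      exact not_unit_13 (hcop.isUnit_of_dvd' h13a h13b)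
    · have hp13 : ¬ (p : ℤ) ∣ 13 := by
        intro hd
        have hd' : p ∣ 13 := by exact_mod_cast hd
        have := (Nat.prime_dvd_prime_iff_eq hp (by norm_num)).mp hd'
        exact h13 this
      have hpa : (p : ℤ) ∣ a := hpp.dvd_of_dvd_pow ((hpp.dvd_mul.mp hpA).resolve_left hp13)
      have hpb : (p : ℤ) ∣ b := hpp.dvd_of_dvd_pow ((hpp.dvd_mul.mp hpB).resolve_left hp13)
      exact hpp.not_isUnit (hcop.isUnit_of_dvd' hpa hpb)
  -- each factor is a square
  obtain ⟨u, hu⟩ := Int.sq_of_isCoprime hco2 h.symm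
  obtain ⟨v, hv⟩ := Int.sq_of_isCoprime hco2.symm (by rw [mul_comm]; exact h.symm)
  have hXu : 6 * a ^ 2 + b ^ 2 = u ^ 2 := by
    rcases hu with hu | hu
    · exact hu
    · nlinarith [sq_nonneg u]
  have hYv : a ^ 2 - 2 * b ^ 2 = v ^ 2 := by
    rcases hv with hv | hv
    · exact hv
    · nlinarith [sq_nonneg v]
  -- parity: not both even
  have hodd : Odd a ∨ Odd b := by
    by_contra hq
    push_neg at hq
    rw [Int.not_odd_iff_even, Int.not_odd_iff_even] at hq
    exact not_unit_two (hcop.isUnit_of_dvd' hq.1.two_dvd hq.2.two_dvd)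
  -- move to ZMod 8
  have e1 : 6 * (a : ZMod 8) ^ 2 + (b : ZMod 8) ^ 2 = (u : ZMod 8) ^ 2 := by
    have := congrArg (Int.cast : ℤ → ZMod 8) hXu
    push_cast at this
    linear_combination this
  have e2 : (a : ZMod 8) ^ 2 - 2 * (b : ZMod 8) ^ 2 = (v : ZMod 8) ^ 2 := by
    have := congrArg (Int.cast : ℤ → ZMod 8) hYv
    push_cast at this
    linear_combination this
  have hodd8 : (a : ZMod 8) ^ 2 = 1 ∨ (b : ZMod 8) ^ 2 = 1 := by
    rcases hodd with h' | h'
    · exact Or.inl (odd_sq8 a h')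
    · exact Or.inr (odd_sq8 b h')
  exact zmod8_key _ _ _ _ hodd8 e1 e2

theorem stmt_1 (t : ℚ) : ¬∃ w : ℚ, w ^ 2 = (-6 * t ^ 2 - 1) * (2 - t ^ 2) := by
  rintro ⟨w, hw⟩
  set a : ℤ := t.num with ha
  set b : ℤ := (t.den : ℤ) with hbdef
  have hb : 0 < b := by rw [hbdef]; exact_mod_cast t.pos
  have hbne : (b : ℚ) ≠ 0 := by exact_mod_cast hb.ne'
  have hcop : IsCoprime a b := by
    rw [Int.isCoprime_iff_gcd_eq_one]
    simpa [Int.gcd, ha, hbdef, Nat.Coprime] using t.reduced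
  have ht : (a : ℚ) = t * b := by
    rw [ha, hbdef]
    push_cast
    field_simp [Rat.num_div_den]
    exact (Rat.mul_den_eq_num t).symm
  set u : ℚ := w * (b : ℚ) ^ 2 with hu
  have key : u ^ 2 = ((6 * a ^ 2 + b ^ 2) * (a ^ 2 - 2 * b ^ 2) : ℤ) := by
    push_cast
    rw [ht, hu]
    linear_combination ((b : ℚ)) ^ 4 * hw
  have hden : u.den = 1 := by
    have h2 : (u ^ 2).den = 1 := by rw [key]; exact Rat.den_intCast _
    rw [Rat.den_pow] at h2
    have := (Nat.pow_eq_one.mp h2).resolve_right two_ne_zero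
    exact this
  have hc : ((u.num : ℚ)) = u := by
    conv_rhs => rw [← Rat.num_div_den u, hden]
    simp
  have hceq : u.num ^ 2 = (6 * a ^ 2 + b ^ 2) * (a ^ 2 - 2 * b ^ 2) := by
    have : ((u.num : ℚ)) ^ 2 = ((6 * a ^ 2 + b ^ 2) * (a ^ 2 - 2 * b ^ 2) : ℤ) := by
      rw [hc]; exact key
    exact_mod_cast this
  exact main_int a b u.num hb hcop hceq
end

section
/- Let a, b, c ∈ ℚ with a ≠ 0. If b² - 4ac is not a square in ℚ and a·c is not a square in ℚ, then the polynomial a·x⁴ + b·x² + c is irreducible in ℚ[x]. -/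
open Polynomial

private lemma quad_form (p : ℚ[X]) (hp : p.natDegree ≤ 2) :
    p = C (p.coeff 2) * X^2 + C (p.coeff 1) * X + C (p.coeff 0) := by
  ext n
  match n with
  | 0 => simp
  | 1 => simp
  | 2 => simp
  | (n+3) =>
    rw [p.coeff_eq_zero_of_natDegree_lt (by omega)]
    simp [coeff_X_pow]

private lemma root_of_deg1 (g : ℚ[X]) (hg : g.natDegree = 1) : ∃ x, g.eval x = 0 := by
  have hg0 : g ≠ 0 := fun h0 => by simp [h0] at hg
  have h1 : g.coeff 1 ≠ 0 := by
    rw [← hg]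
    show g.leadingCoeff ≠ 0
    exact mt Polynomial.leadingCoeff_eq_zero.mp hg0
  refine ⟨-(g.coeff 0) / g.coeff 1, ?_⟩
  have hform := Polynomial.eq_X_add_C_of_natDegree_le_one (le_of_eq hg)
  conv_lhs => arg 2; rw [hform]
  simp only [eval_add, eval_mul, eval_C, eval_X]
  field_simp
  ring

private lemma one_le_deg (g : ℚ[X]) (hg0 : g ≠ 0) (hgu : ¬IsUnit g) : 1 ≤ g.natDegree := by
  by_contra hlt
  push_neg at hlt
  have h0 : g.natDegree = 0 := by omega
  have hC := Polynomial.eq_C_of_natDegree_eq_zero h0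
  apply hgu
  rw [hC]
  exact Polynomial.isUnit_C.mpr (isUnit_iff_ne_zero.mpr
    (fun hc => hg0 (by rw [hC, hc, map_zero])))

open Polynomial in
theorem stmt_2 (a b c : ℚ) (ha : a ≠ 0)
    (h1 : ¬∃ r : ℚ, r ^ 2 = b ^ 2 - 4 * a * c)
    (h2 : ¬∃ r : ℚ, r ^ 2 = a * c) :
    Irreducible (C a * X ^ 4 + C b * X ^ 2 + C c) := by
  set f := C a * X ^ 4 + C b * X ^ 2 + C c with hfdef
  have hdeg : f.natDegree = 4 := by
    unfold f; compute_degree!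
  have hf0 : f ≠ 0 := by
    intro h; rw [h] at hdeg; simp at hdeg
  have noroot : ∀ x : ℚ, f.eval x ≠ 0 := by
    intro x hx
    have hx' : a * x ^ 4 + b * x ^ 2 + c = 0 := by
      simpa [hfdef] using hx
    exact h1 ⟨2 * a * x ^ 2 + b, by linear_combination 4 * a * hx'⟩
  rw [irreducible_iff]
  constructor
  · intro hu
    have := Polynomial.natDegree_eq_zero_of_isUnit hu
    omega
  intro g h hf
  by_contra hgh
  push_neg at hgh
  obtain ⟨hgu, hhu⟩ := hgh
  have hg0 : g ≠ 0 := by rintro rfl; simp at hf; exact hf0 hf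
  have hh0 : h ≠ 0 := by rintro rfl; simp at hf; exact hf0 hf
  have hsum : g.natDegree + h.natDegree = 4 := by
    rw [← Polynomial.natDegree_mul hg0 hh0, ← hf, hdeg]
  have hg1 := one_le_deg g hg0 hgu
  have hh1 := one_le_deg h hh0 hhu
  rcases (by omega : g.natDegree = 1 ∨ g.natDegree = 3 ∨ (g.natDegree = 2 ∧ h.natDegree = 2)) with hd | hd | ⟨hdg, hdh⟩
  · obtain ⟨x, hx⟩ := root_of_deg1 g hd
    exact noroot x (by rw [hf, eval_mul, hx, zero_mul])
  · have hdh : h.natDegree = 1 := by omega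
    obtain ⟨x, hx⟩ := root_of_deg1 h hdh
    exact noroot x (by rw [hf, eval_mul, hx, mul_zero])
  · -- quadratic times quadratic
    rw [quad_form g (le_of_eq hdg), quad_form h (le_of_eq hdh)] at hf
    set p := g.coeff 2; set q := g.coeff 1; set r := g.coeff 0
    set s := h.coeff 2; set t := h.coeff 1; set u := h.coeff 0
    have h4 := congrArg (fun P => Polynomial.coeff P 4) hf
    have h3 := congrArg (fun P => Polynomial.coeff P 3) hf
    have h2' := congrArg (fun P => Polynomial.coeff P 2) hf
    have h1' := congrArg (fun P => Polynomial.coeff P 1) hf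
    have h0' := congrArg (fun P => Polynomial.coeff P 0) hf
    simp [hfdef, coeff_mul, Finset.Nat.sum_antidiagonal_eq_sum_range_succ_mk,
      coeff_X_pow, coeff_X, coeff_one, Finset.sum_range_succ] at h4 h3 h2' h1' h0'
    -- h4 : a = p*s etc (some form); normalize
    have e4 : p * s = a := by linarith
    have e3 : p * t + q * s = 0 := by linarith
    have e2 : p * u + q * t + r * s = b := by linarith
    have e1 : q * u + r * t = 0 := by linarith
    have e0 : r * u = c := by linarith
    by_cases hq : q = 0
    · apply h1
      refine ⟨p * u - r * s, ?_⟩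
      linear_combination (p * u + r * s + b) * e2 - 4 * c * e4 - 4 * p * s * e0
        - (p * u + r * s + b) * t * hq
    · have hpu : p * u = r * s := by
        have hq0 : q * (p * u - r * s) = 0 := by linear_combination p * e1 - r * e3
        have := mul_eq_zero.mp hq0
        rcases this with h' | h'
        · exact absurd h' hq
        · linarith
      apply h2
      exact ⟨r * s, by linear_combination r * u * e4 + a * e0 - r * s * hpu⟩
end

section
/- For every rational number t, the polynomial P_t(x) = (2 - t²)x⁴ + (3 + 5t²)x² + (-6t² - 1) is irreducible in ℚ[x]. -/
-- parity / mod helpers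
lemma odd_sq_mod8 (x : ℤ) (h : x % 2 = 1) : x ^ 2 % 8 = 1 := by
  obtain ⟨k, hk⟩ : ∃ k, x = 2 * k + 1 := ⟨x / 2, by omega⟩
  have h2 : x ^ 2 = 8 * (k * (k + 1) / 2) + 1 := by
    have : 2 ∣ k * (k + 1) := (Int.even_mul_succ_self k).two_dvd
    obtain ⟨m, hm⟩ := this
    have : x ^ 2 = 4 * (k * (k+1)) + 1 := by rw [hk]; ring
    omega
  omega

lemma odd_sq_mod16 (x : ℤ) (h : x % 2 = 1) : x ^ 2 % 16 = 1 ∨ x ^ 2 % 16 = 9 := by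
  have h8 : x % 4 = 1 ∨ x % 4 = 3 := by omega
  rcases h8 with h8 | h8
  · obtain ⟨k, hk⟩ : ∃ k, x = 4 * k + 1 := ⟨x / 4, by omega⟩
    have : x ^ 2 = 16 * k ^ 2 + 8 * k + 1 := by rw [hk]; ring
    have h2 : x ^ 2 % 16 = (8 * k + 1) % 16 := by omega
    rcases Int.even_or_odd k with ⟨m, hm⟩ | ⟨m, hm⟩ <;> omega
  · obtain ⟨k, hk⟩ : ∃ k, x = 4 * k + 3 := ⟨x / 4, by omega⟩
    have : x ^ 2 = 16 * k ^ 2 + 24 * k + 9 := by rw [hk]; ring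
    have h2 : x ^ 2 % 16 = (24 * k + 9) % 16 := by omega
    rcases Int.even_or_odd k with ⟨m, hm⟩ | ⟨m, hm⟩ <;> omega

lemma odd_pow4_mod16 (x : ℤ) (h : x % 2 = 1) : x ^ 4 % 16 = 1 := by
  have h1 := odd_sq_mod16 x h
  have h2 : x ^ 4 = (x ^ 2) ^ 2 := by ring
  have h3 : x ^ 2 % 2 = 1 := by
    have := odd_sq_mod8 x h; omega
  rcases h1 with h1 | h1
  · obtain ⟨k, hk⟩ : ∃ k, x ^ 2 = 16 * k + 1 := ⟨x ^ 2 / 16, by omega⟩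
    have : x ^ 4 = 16 * (16 * k ^ 2 + 2 * k) + 1 := by rw [h2, hk]; ring
    omega
  · obtain ⟨k, hk⟩ : ∃ k, x ^ 2 = 16 * k + 9 := ⟨x ^ 2 / 16, by omega⟩
    have : x ^ 4 = 16 * (16 * k ^ 2 + 18 * k + 5) + 1 := by rw [h2, hk]; ring
    omega

lemma sq_mod16 (x : ℤ) : x ^ 2 % 16 = 0 ∨ x ^ 2 % 16 = 1 ∨ x ^ 2 % 16 = 4 ∨ x ^ 2 % 16 = 9 := by
  rcases Int.even_or_odd x with ⟨k, hk⟩ | hodd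
  · have hk' : x = 2 * k := by omega
    have h2 : x ^ 2 = 4 * k ^ 2 := by rw [hk']; ring
    have h3 := odd_sq_mod16 k
    rcases Int.even_or_odd k with ⟨m, hm⟩ | ⟨m, hm⟩
    · have hm' : k = 2 * m := by omega
      have : x ^ 2 = 16 * m ^ 2 := by rw [hk', hm']; ring
      omega
    · have hk2 := h3 (by omega)
      omega
  · obtain ⟨k, hk⟩ := hodd
    have h := odd_sq_mod16 x (by omega)
    omega

lemma even_sq_mod8 (x : ℤ) (h : x % 2 = 0) : x ^ 2 % 8 = 0 ∨ x ^ 2 % 8 = 4 := by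
  obtain ⟨k, hk⟩ : ∃ k, x = 2 * k := ⟨x / 2, by omega⟩
  have h2 : x ^ 2 = 4 * k ^ 2 := by rw [hk]; ring
  rcases Int.even_or_odd k with ⟨m, hm⟩ | ⟨m, hm⟩
  · have : x ^ 2 = 8 * (2 * m ^ 2) := by rw [h2, show k = 2*m by omega]; ring
    omega
  · have hk2 := odd_sq_mod8 k (by omega)
    omega

lemma sq_mod4 (x : ℤ) : x ^ 2 % 4 = 0 ∨ x ^ 2 % 4 = 1 := by
  rcases Int.even_or_odd x with ⟨k, hk⟩ | ⟨k, hk⟩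
  · have : x ^ 2 = 4 * k ^ 2 := by rw [show x = 2*k by omega]; ring
    omega
  · have := odd_sq_mod8 x (by omega); omega

-- ZMod 13 facts
lemma zmod13_2 (p q : ℤ) (h : (13:ℤ) ∣ p ^ 2 + 37 * q ^ 2) : (13:ℤ) ∣ p ∧ (13:ℤ) ∣ q := by
  have h13 : ∀ a b : ZMod 13, a ^ 2 + 37 * b ^ 2 = 0 → a = 0 ∧ b = 0 := by decide
  have hcast : ((p ^ 2 + 37 * q ^ 2 : ℤ) : ZMod 13) = 0 := by
    exact_mod_cast (ZMod.intCast_zmod_eq_zero_iff_dvd _ 13).mpr h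
  push_cast at hcast
  obtain ⟨h1, h2⟩ := h13 _ _ hcast
  constructor
  · exact_mod_cast (ZMod.intCast_zmod_eq_zero_iff_dvd p 13).mp h1
  · exact_mod_cast (ZMod.intCast_zmod_eq_zero_iff_dvd q 13).mp h2

lemma coprime_13_kill {n : ℤ} {d : ℕ} (hn : (13:ℤ) ∣ n) (hd : (13:ℤ) ∣ (d:ℤ))
    (hcop : n.natAbs.Coprime d) : False := by
  have h1 : (13:ℕ) ∣ n.natAbs := by
    have := Int.natAbs_dvd_natAbs.mpr hn; simpa using this
  have h2 : (13:ℕ) ∣ d := by exact_mod_cast hd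
  have := Nat.dvd_gcd h1 h2
  rw [Nat.Coprime] at hcop
  omega

lemma zmod13_two (a b : ℤ) (h : (13:ℤ) ∣ 2 * b ^ 2 - a ^ 2) : (13:ℤ) ∣ a ∧ (13:ℤ) ∣ b := by
  have key : ∀ x y : ZMod 13, 2 * y ^ 2 - x ^ 2 = 0 → x = 0 ∧ y = 0 := by decide
  have hcast : ((2 * b ^ 2 - a ^ 2 : ℤ) : ZMod 13) = 0 :=
    (ZMod.intCast_zmod_eq_zero_iff_dvd _ 13).mpr h
  push_cast at hcast
  obtain ⟨h1, h2⟩ := key _ _ hcast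
  exact ⟨(ZMod.intCast_zmod_eq_zero_iff_dvd a 13).mp h1,
    (ZMod.intCast_zmod_eq_zero_iff_dvd b 13).mp h2⟩

lemma zmod13_six (a b : ℤ) (h : (13:ℤ) ∣ 6 * b ^ 2 - a ^ 2) : (13:ℤ) ∣ a ∧ (13:ℤ) ∣ b := by
  have key : ∀ x y : ZMod 13, 6 * y ^ 2 - x ^ 2 = 0 → x = 0 ∧ y = 0 := by decide
  have hcast : ((6 * b ^ 2 - a ^ 2 : ℤ) : ZMod 13) = 0 :=
    (ZMod.intCast_zmod_eq_zero_iff_dvd _ 13).mpr h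
  push_cast at hcast
  obtain ⟨h1, h2⟩ := key _ _ hcast
  exact ⟨(ZMod.intCast_zmod_eq_zero_iff_dvd a 13).mp h1,
    (ZMod.intCast_zmod_eq_zero_iff_dvd b 13).mp h2⟩

lemma ratB (t β : ℚ) : (2 - t ^ 2) * (6 - β ^ 2) ≠ 13 := by
  intro h
  have ha : (t.num : ℚ) = t * t.den := by
    have h0 : ((t.den:ℚ)) ≠ 0 := by exact_mod_cast t.den_nz
    exact (Rat.mul_den_eq_num t).symm
  have hc : (β.num : ℚ) = β * β.den := by
    have h0 : ((β.den:ℚ)) ≠ 0 := by exact_mod_cast β.den_nz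
    exact (Rat.mul_den_eq_num β).symm
  have key : (2 * (t.den:ℤ) ^ 2 - t.num ^ 2) * (6 * (β.den:ℤ) ^ 2 - β.num ^ 2)
      = 13 * (t.den:ℤ) ^ 2 * (β.den:ℤ) ^ 2 := by
    have h2 : ((2 * ((t.den:ℤ):ℚ) ^ 2 - ((t.num:ℤ):ℚ) ^ 2) * (6 * ((β.den:ℤ):ℚ) ^ 2 - ((β.num:ℤ):ℚ) ^ 2))
        = 13 * ((t.den:ℤ):ℚ) ^ 2 * ((β.den:ℤ):ℚ) ^ 2 := by
      push_cast
      rw [ha, hc]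
      linear_combination ((t.den:ℚ) ^ 2 * (β.den:ℚ) ^ 2) * h
    exact_mod_cast h2
  have h13 : Prime (13:ℤ) := by norm_num
  have hdvd : (13:ℤ) ∣ (2 * (t.den:ℤ) ^ 2 - t.num ^ 2) * (6 * (β.den:ℤ) ^ 2 - β.num ^ 2) := by
    rw [key]; exact ⟨(t.den:ℤ) ^ 2 * (β.den:ℤ) ^ 2, by ring⟩
  rcases h13.dvd_mul.mp hdvd with hd | hd
  · obtain ⟨h1, h2⟩ := zmod13_two t.num (t.den:ℤ) hd
    exact coprime_13_kill h1 h2 t.reduced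
  · obtain ⟨h1, h2⟩ := zmod13_six β.num (β.den:ℤ) hd
    exact coprime_13_kill h1 h2 β.reduced

-- rational to integer reduction for lemma A, assuming the integer statement
lemma ratA_of_intA
    (intA : ∀ p q Y : ℤ, IsCoprime p q → q ≠ 0 → Y ^ 2 ≠ p ^ 4 + 74 * p ^ 2 * q ^ 2 + 17 * q ^ 4)
    (y t : ℚ) : y ^ 2 ≠ t ^ 4 + 74 * t ^ 2 + 17 := by
  intro h
  set r : ℚ := y * (t.den:ℚ) ^ 2 with hr
  have ht : (t.num : ℚ) = t * t.den := by
    have h0 : ((t.den:ℚ)) ≠ 0 := by exact_mod_cast t.den_nz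
    exact (Rat.mul_den_eq_num t).symm
  have hden : ((t.den:ℚ)) ≠ 0 := by
    exact_mod_cast t.den_nz
  have hrsq : r ^ 2 = ((t.num ^ 4 + 74 * t.num ^ 2 * (t.den:ℤ) ^ 2 + 17 * (t.den:ℤ) ^ 4 : ℤ) : ℚ) := by
    push_cast
    rw [hr, ht]
    linear_combination ((t.den:ℚ) ^ 4) * h
  -- r is an integer
  have hden1 : r.den = 1 := by
    have h1 : (r * r).den = 1 := by
      rw [show r * r = r ^ 2 by ring, hrsq, Rat.den_intCast]
    rw [Rat.mul_self_den] at h1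
    exact Nat.eq_one_of_mul_eq_one_right h1
  have hrint : ((r.num : ℚ)) = r := by
    conv_rhs => rw [← Rat.num_div_den r]
    rw [hden1]; simp
  have hZ : r.num ^ 2 = t.num ^ 4 + 74 * t.num ^ 2 * (t.den:ℤ) ^ 2 + 17 * (t.den:ℤ) ^ 4 := by
    have : ((r.num:ℚ)) ^ 2 = ((t.num ^ 4 + 74 * t.num ^ 2 * (t.den:ℤ) ^ 2 + 17 * (t.den:ℤ) ^ 4 : ℤ) : ℚ) := by
      rw [hrint]; exact hrsq
    exact_mod_cast this
  have hcop : IsCoprime t.num ((t.den:ℤ)) := by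
    rw [Int.isCoprime_iff_gcd_eq_one]
    exact_mod_cast t.reduced
  exact intA t.num (t.den:ℤ) r.num hcop (by exact_mod_cast t.den_nz) hZ

lemma sq_pos_eq (a b : ℤ) (h : a ^ 2 = b ^ 2) (ha : 0 ≤ a) (hb : 0 ≤ b) : a = b := by
  nlinarith [sq_nonneg (a - b), sq_nonneg (a + b)]

lemma KV_core (q x y : ℤ) (hx : 0 < x) (hy : 0 < y) (hcop : IsCoprime x y) (hxe : x % 2 = 0)
    (hprod : x * y = 2 * (13 * q ^ 2) ^ 2) :
    ∃ K V : ℤ, x = 2 * K ^ 2 ∧ y = V ^ 2 ∧ 0 < K ∧ 0 < V ∧ V % 2 = 1 ∧ IsCoprime K V ∧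
      K * V = 13 * q ^ 2 := by
  have hyodd : y % 2 = 1 := by
    rcases Int.even_or_odd y with ⟨m, hm⟩ | ⟨m, hm⟩
    · exfalso
      have h2x : (2:ℤ) ∣ x := by omega
      have h2y : (2:ℤ) ∣ y := by omega
      have := hcop.isUnit_of_dvd' h2x h2y
      rw [Int.isUnit_iff] at this
      omega
    · omega
  obtain ⟨k, hk⟩ : ∃ k, x = 2 * k := ⟨x / 2, by omega⟩
  have hkpos : 0 < k := by omega
  have hkv : k * y = (13 * q ^ 2) ^ 2 := by
    have h2 : 2 * (k * y) = 2 * (13 * q ^ 2) ^ 2 := by rw [← hprod, hk]; ring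
    omega
  have hcop' : IsCoprime k y := by
    have : IsCoprime (2 * k) y := hk ▸ hcop
    exact IsCoprime.of_mul_left_right this
  obtain ⟨a, ha⟩ := Int.sq_of_isCoprime hcop' hkv
  have hk2 : k = a ^ 2 := by
    rcases ha with ha | ha
    · exact ha
    · nlinarith [sq_nonneg a]
  obtain ⟨b, hb⟩ := Int.sq_of_isCoprime hcop'.symm (by rw [mul_comm]; exact hkv)
  have hy2 : y = b ^ 2 := by
    rcases hb with hb | hb
    · exact hb
    · nlinarith [sq_nonneg b]
  refine ⟨|a|, |b|, by rw [hk, hk2, sq_abs], by rw [hy2, sq_abs], ?_, ?_, ?_, ?_, ?_⟩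
  · have : a ≠ 0 := by rintro rfl; simp at hk2; omega
    positivity
  · have : b ≠ 0 := by rintro rfl; simp at hy2; omega
    positivity
  · -- |b| odd
    rcases Int.even_or_odd b with ⟨m, hm⟩ | ⟨m, hm⟩
    · exfalso
      have : y = 4 * m ^ 2 := by rw [hy2, show b = 2 * m by omega]; ring
      omega
    · rcases abs_choice b with h | h <;> omega
  · -- coprime |a| |b|
    have h1 : IsCoprime (a ^ 2) (b ^ 2) := by rw [← hk2, ← hy2]; exact hcop'
    have h2 : IsCoprime a b :=
      IsCoprime.of_isCoprime_of_dvd_left (IsCoprime.of_isCoprime_of_dvd_right h1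
        (dvd_pow_self b (by norm_num))) (dvd_pow_self a (by norm_num))
    rcases abs_choice a with ha' | ha' <;> rcases abs_choice b with hb' | hb' <;> rw [ha', hb']
    · exact h2
    · exact h2.neg_right
    · exact h2.neg_left
    · exact h2.neg_left.neg_right
  · -- |a| * |b| = 13 q^2
    apply sq_pos_eq
    · rw [mul_pow, sq_abs, sq_abs, ← hk2, ← hy2, hkv]
    · positivity
    · positivity

lemma case2_fin (p q K V : ℤ) (hp : p % 2 = 0) (hq : q % 2 = 1) (hK : K % 2 = 1) (hV : V % 2 = 1)
    (heq : p ^ 2 + 37 * q ^ 2 = 2 * K ^ 2 + V ^ 2) : False := by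
  have h1 := even_sq_mod8 p hp
  have h2 := odd_sq_mod8 q hq
  have h3 := odd_sq_mod8 K hK
  have h4 := odd_sq_mod8 V hV
  set a := p ^ 2; clear_value a
  set b := q ^ 2; clear_value b
  set c := K ^ 2; clear_value c
  set d := V ^ 2; clear_value d
  omega

-- both p q odd: impossible mod 16
lemma case_oddodd (p q Y : ℤ) (hp : p % 2 = 1) (hq : q % 2 = 1)
    (hY : Y ^ 2 = p ^ 4 + 74 * p ^ 2 * q ^ 2 + 17 * q ^ 4) : False := by
  have h1 := odd_pow4_mod16 p hp
  have h2 := odd_pow4_mod16 q hq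
  have hpq : (p * q) % 2 = 1 := by
    rw [Int.mul_emod, hp, hq]; rfl
  have h3 := odd_sq_mod16 (p * q) hpq
  have h4 := sq_mod16 Y
  have heq : Y ^ 2 = p ^ 4 + 74 * (p * q) ^ 2 + 17 * q ^ 4 := by linear_combination hY
  set a := p ^ 4 with ha; clear_value a
  set b := q ^ 4 with hb; clear_value b
  set c := (p * q) ^ 2 with hc; clear_value c
  set d := Y ^ 2 with hd; clear_value d
  omega

lemma uv_exists (p q Y : ℤ) (hcop : IsCoprime p q) (hq0 : q ≠ 0)
    (hY : Y ^ 2 = p ^ 4 + 74 * p ^ 2 * q ^ 2 + 17 * q ^ 4)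
    (hodd : (p ^ 2 + 37 * q ^ 2) % 2 = 1) :
    ∃ u v : ℤ, u + v = p ^ 2 + 37 * q ^ 2 ∧ u * v = 2 * (13 * q ^ 2) ^ 2 ∧
      0 < u ∧ 0 < v ∧ IsCoprime u v := by
  set A := p ^ 2 + 37 * q ^ 2 with hA
  have hAY : A ^ 2 - Y ^ 2 = 1352 * (q ^ 2) ^ 2 := by rw [hA]; linear_combination -hY
  have hA2 := odd_sq_mod8 A hodd
  have hYodd : Y % 2 = 1 := by
    rcases Int.even_or_odd Y with ⟨k, hk⟩ | ⟨k, hk⟩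
    · exfalso
      have h1 : Y ^ 2 = 4 * k ^ 2 := by rw [show Y = 2 * k by omega]; ring
      set a := A ^ 2 with hh1; clear_value a
      set b := Y ^ 2 with hh2; clear_value b
      set c := (q ^ 2) ^ 2 with hh3; clear_value c
      set d := k ^ 2 with hh4; clear_value d
      omega
    · omega
  obtain ⟨u, hu⟩ : ∃ u, A - Y = 2 * u := ⟨(A - Y) / 2, by omega⟩
  refine ⟨u, A - u, by ring, ?_, ?_, ?_, ?_⟩
  · have h4 : 4 * (u * (A - u)) = 1352 * (q ^ 2) ^ 2 := by
      have hv : A + Y = 2 * (A - u) := by omega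
      calc 4 * (u * (A - u)) = (2 * u) * (2 * (A - u)) := by ring
        _ = (A - Y) * (A + Y) := by rw [← hu, ← hv]
        _ = A ^ 2 - Y ^ 2 := by ring
        _ = 1352 * (q ^ 2) ^ 2 := hAY
    nlinarith [h4]
  · -- 0 < u
    have hApos : 0 < A := by
      have : 0 < q ^ 2 := by positivity
      nlinarith
    have huv : 0 < u * (A - u) := by
      have h4 : 4 * (u * (A - u)) = 1352 * (q ^ 2) ^ 2 := by
        have hv : A + Y = 2 * (A - u) := by omega
        calc 4 * (u * (A - u)) = (2 * u) * (2 * (A - u)) := by ring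
          _ = (A - Y) * (A + Y) := by rw [← hu, ← hv]
          _ = A ^ 2 - Y ^ 2 := by ring
          _ = 1352 * (q ^ 2) ^ 2 := hAY
      have : 0 < q ^ 2 := by positivity
      nlinarith
    nlinarith [huv, hApos, sq_nonneg u, sq_nonneg (A - u)]
  · have hApos : 0 < A := by
      have : 0 < q ^ 2 := by positivity
      nlinarith
    have huv : 0 < u * (A - u) := by
      have h4 : 4 * (u * (A - u)) = 1352 * (q ^ 2) ^ 2 := by
        have hv : A + Y = 2 * (A - u) := by omega
        calc 4 * (u * (A - u)) = (2 * u) * (2 * (A - u)) := by ring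
          _ = (A - Y) * (A + Y) := by rw [← hu, ← hv]
          _ = A ^ 2 - Y ^ 2 := by ring
          _ = 1352 * (q ^ 2) ^ 2 := hAY
      have : 0 < q ^ 2 := by positivity
      nlinarith
    nlinarith [huv, hApos, sq_nonneg u, sq_nonneg (A - u)]
  · -- coprime
    set v := A - u with hvdef
    have huvprod : u * v = 2 * (13 * q ^ 2) ^ 2 := by
      have h4 : 4 * (u * v) = 1352 * (q ^ 2) ^ 2 := by
        have hv : A + Y = 2 * v := by rw [hvdef]; omega
        calc 4 * (u * v) = (2 * u) * (2 * v) := by ring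
          _ = (A - Y) * (A + Y) := by rw [← hu, ← hv]
          _ = A ^ 2 - Y ^ 2 := by ring
          _ = 1352 * (q ^ 2) ^ 2 := hAY
      nlinarith [h4]
    rw [Int.isCoprime_iff_gcd_eq_one]
    by_contra hne
    obtain ⟨r, hrp, hrd⟩ := Nat.exists_prime_and_dvd hne
    have hru : (r:ℤ) ∣ u := dvd_trans (Int.natCast_dvd_natCast.mpr hrd) (Int.gcd_dvd_left _ _)
    have hrv : (r:ℤ) ∣ v := dvd_trans (Int.natCast_dvd_natCast.mpr hrd) (Int.gcd_dvd_right _ _)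
    have hrA : (r:ℤ) ∣ A := by
      have := dvd_add hru hrv
      rwa [show u + v = A by rw [hvdef]; ring] at this
    have hrZ : Prime ((r:ℕ):ℤ) := Nat.prime_iff_prime_int.mp hrp
    have hr2 : r ≠ 2 := by
      intro h2
      subst h2
      obtain ⟨m, hm⟩ := hrA
      push_cast at hm
      omega
    have hrprod : (r:ℤ) ∣ 2 * (13 * q ^ 2) ^ 2 := huvprod ▸ Dvd.dvd.mul_right hru v
    rcases hrZ.dvd_mul.mp hrprod with hd | hd
    · have : (r:ℕ) ∣ 2 := by exact_mod_cast Int.natCast_dvd_natCast.mp (by exact_mod_cast hd)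
      have h2 : r = 2 := (Nat.prime_dvd_prime_iff_eq hrp (by norm_num)).mp this
      exact hr2 h2
    · have hd13q : (r:ℤ) ∣ 13 * q ^ 2 := hrZ.dvd_of_dvd_pow hd
      rcases hrZ.dvd_mul.mp hd13q with hd' | hd'
      · -- r = 13
        have hr13 : (r:ℕ) ∣ 13 := by exact_mod_cast Int.natCast_dvd_natCast.mp (by exact_mod_cast hd')
        have : r = 13 := (Nat.prime_dvd_prime_iff_eq hrp (by norm_num)).mp hr13
        subst this
        obtain ⟨h1, h2⟩ := zmod13_2 p q (by exact_mod_cast hrA)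
        have := hcop.isUnit_of_dvd' h1 h2
        rw [Int.isUnit_iff] at this
        omega
      · have hrq : (r:ℤ) ∣ q := hrZ.dvd_of_dvd_pow hd'
        have hrp2 : (r:ℤ) ∣ p ^ 2 := by
          have : (r:ℤ) ∣ A - 37 * q ^ 2 := by
            apply dvd_sub hrA
            exact Dvd.dvd.mul_left (dvd_pow hrq (by norm_num)) 37
          rwa [show A - 37 * q ^ 2 = p ^ 2 by rw [hA]; ring] at this
        have hrp' : (r:ℤ) ∣ p := hrZ.dvd_of_dvd_pow hrp2
        have := hcop.isUnit_of_dvd' hrp' hrq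
        rw [Int.isUnit_iff] at this
        have hge := hrp.two_le
        omega

lemma coprime_of_sq {a b : ℤ} (h : IsCoprime (a ^ 2) (b ^ 2)) : IsCoprime a b :=
  IsCoprime.of_isCoprime_of_dvd_left
    (IsCoprime.of_isCoprime_of_dvd_right h (dvd_pow_self b (by norm_num)))
    (dvd_pow_self a (by norm_num))

lemma natAbs_le_of_sq_le {a b : ℤ} (h : a ^ 2 ≤ b ^ 2) : a.natAbs ≤ b.natAbs :=
  Int.natAbs_le_iff_mul_self_le.mpr (by nlinarith)

lemma subdesc_core (N : ℕ)
    (IH : ∀ q : ℤ, q.natAbs ≤ N → ∀ p Y : ℤ, IsCoprime p q → q ≠ 0 →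
      Y ^ 2 ≠ p ^ 4 + 74 * p ^ 2 * q ^ 2 + 17 * q ^ 4)
    (g₁ g₂ κ W : ℤ)
    (hκ : κ ≠ 0) (hbound : κ.natAbs ≤ N)
    (hprod : g₁ * g₂ = 17 * κ ^ 4)
    (hsum : g₁ + g₂ = W ^ 2 - 74 * κ ^ 2)
    (hdodd : (g₂ - g₁) % 2 = 1)
    (hcop : IsCoprime g₁ g₂)
    (hW : W % 2 = 1)
    (h17 : (17:ℤ) ∣ g₁) : False := by
  obtain ⟨h, hh⟩ := h17
  have hkappa4 : (0:ℤ) < κ ^ 4 := by positivity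
  have hprod' : h * g₂ = (κ ^ 2) ^ 2 := by
    have h2 : 17 * (h * g₂) = 17 * (κ ^ 2) ^ 2 := by
      linear_combination hprod - g₂ * hh
    linarith
  have hcop' : IsCoprime h g₂ := IsCoprime.of_mul_left_right (hh ▸ hcop)
  obtain ⟨x0, hx0⟩ := Int.sq_of_isCoprime hcop' hprod'
  obtain ⟨y0, hy0⟩ := Int.sq_of_isCoprime hcop'.symm (by rw [mul_comm]; exact hprod')
  rcases hx0 with hx | hx <;> rcases hy0 with hy | hy
  · -- positive case : descent
    have hxy : x0 ^ 2 * y0 ^ 2 = (κ ^ 2) ^ 2 := by rw [← hx, ← hy]; exact hprod'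
    have hcopxy : IsCoprime x0 y0 := coprime_of_sq (by rw [← hx, ← hy]; exact hcop')
    set x := |x0| with hxdef
    set y := |y0| with hydef
    have hxyabs : x * y = κ ^ 2 := by
      apply sq_pos_eq _ _ _ (by positivity) (sq_nonneg κ)
      have : (x * y) ^ 2 = x0 ^ 2 * y0 ^ 2 := by
        rw [mul_pow, sq_abs, sq_abs]
      rw [this, hxy]
    have hx_ne : x0 ≠ 0 := by
      rintro rfl
      rw [abs_zero] at hxdef
      rw [hxdef, zero_mul] at hxyabs
      exact hκ (by nlinarith)
    have hy_ne : y0 ≠ 0 := by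
      rintro rfl
      rw [abs_zero] at hydef
      rw [hydef, mul_zero] at hxyabs
      exact hκ (by nlinarith)
    have hcopxy' : IsCoprime x y := by
      rcases abs_choice x0 with h1 | h1 <;> rcases abs_choice y0 with h2 | h2 <;>
        rw [hxdef, hydef, h1, h2]
      · exact hcopxy
      · exact hcopxy.neg_right
      · exact hcopxy.neg_left
      · exact hcopxy.neg_left.neg_right
    obtain ⟨a0, ha0⟩ := Int.sq_of_isCoprime hcopxy' hxyabs
    obtain ⟨b0, hb0⟩ := Int.sq_of_isCoprime hcopxy'.symm (by rw [mul_comm]; exact hxyabs)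
    have hxa : x = a0 ^ 2 := by
      rcases ha0 with h' | h'
      · exact h'
      · have : 0 ≤ x := abs_nonneg x0
        have hne : x ≠ 0 := by rw [hxdef]; simpa using hx_ne
        nlinarith [sq_nonneg a0]
    have hyb : y = b0 ^ 2 := by
      rcases hb0 with h' | h'
      · exact h'
      · have : 0 ≤ y := abs_nonneg y0
        have hne : y ≠ 0 := by rw [hydef]; simpa using hy_ne
        nlinarith [sq_nonneg b0]
    have ha_ne : a0 ≠ 0 := by
      rintro rfl
      rw [hxdef] at hxa
      simp at hxa
      exact hx_ne hxa
    have hb_ne : b0 ≠ 0 := by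
      rintro rfl
      rw [hydef] at hyb
      simp at hyb
      exact hy_ne hyb
    have hcopab : IsCoprime a0 b0 := coprime_of_sq (by rw [← hxa, ← hyb]; exact hcopxy')
    have hκ2 : κ ^ 2 = a0 ^ 2 * b0 ^ 2 := by rw [← hxa, ← hyb, hxyabs]
    have hGood : W ^ 2 = b0 ^ 4 + 74 * b0 ^ 2 * a0 ^ 2 + 17 * a0 ^ 4 := by
      have hg1 : g₁ = 17 * a0 ^ 4 := by
        rw [hh, hx]
        have : x0 ^ 2 = x ^ 2 := (sq_abs x0).symm
        rw [this, hxa]; ring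
      have hg2 : g₂ = b0 ^ 4 := by
        rw [hy]
        have : y0 ^ 2 = y ^ 2 := (sq_abs y0).symm
        rw [this, hyb]; ring
      have h5 := hsum
      rw [hg1, hg2] at h5
      linear_combination -h5 + 74 * hκ2
    have hbnd : a0.natAbs ≤ N := by
      have hb1 : (0:ℤ) < b0 ^ 2 := by positivity
      have h1 : a0 ^ 2 ≤ κ ^ 2 := by nlinarith [sq_nonneg a0]
      exact le_trans (natAbs_le_of_sq_le h1) hbound
    exact IH a0 hbnd b0 W hcopab.symm ha_ne hGood
  · -- mixed sign : impossible
    have h0 : (x0 * y0) ^ 2 + (κ ^ 2) ^ 2 = 0 := by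
      linear_combination -hprod' + g₂ * hx + x0 ^ 2 * hy
    have h1 : (0:ℤ) < (κ ^ 2) ^ 2 := by positivity
    linarith [sq_nonneg (x0 * y0)]
  · have : -x0 ^ 2 * y0 ^ 2 = (κ ^ 2) ^ 2 := by rw [← hx, ← hy]; exact hprod'
    nlinarith [sq_nonneg (x0 * y0), sq_nonneg (κ ^ 2), hkappa4]
  · -- negative case : mod 4
    have hxy : x0 ^ 2 * y0 ^ 2 = (κ ^ 2) ^ 2 := by
      linear_combination hprod' - g₂ * hx + x0 ^ 2 * hy
    set x := |x0| with hxdef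
    set y := |y0| with hydef
    have hxyabs : x * y = κ ^ 2 := by
      apply sq_pos_eq _ _ _ (by positivity) (sq_nonneg κ)
      have : (x * y) ^ 2 = x0 ^ 2 * y0 ^ 2 := by rw [mul_pow, sq_abs, sq_abs]
      rw [this, hxy]
    have heq : W ^ 2 + 17 * x ^ 2 + y ^ 2 = 74 * (x * y) := by
      have h1 : g₁ = -17 * x ^ 2 := by rw [hh, hx, hxdef, sq_abs]; ring
      have h2 : g₂ = -y ^ 2 := by rw [hy, hydef, sq_abs]
      have h5 := hsum
      rw [h1, h2] at h5
      linear_combination -h5 - 74 * hxyabs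
    have hdodd' : (17 * x ^ 2 - y ^ 2) % 2 = 1 := by
      have hd : g₂ - g₁ = 17 * x ^ 2 - y ^ 2 := by
        rw [hh, hx, hy, hxdef, hydef, sq_abs, sq_abs]; ring
      rw [hd] at hdodd
      exact hdodd
    have hparity : (x % 2 = 0 ∧ y % 2 = 1) ∨ (x % 2 = 1 ∧ y % 2 = 0) := by
      rcases Int.even_or_odd x with ⟨m, hm⟩ | ⟨m, hm⟩ <;>
        rcases Int.even_or_odd y with ⟨n, hn⟩ | ⟨n, hn⟩
      · exfalso
        have : 17 * x ^ 2 - y ^ 2 = 2 * (34 * m ^ 2 - 2 * n ^ 2) := by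
          rw [show x = 2*m by omega, show y = 2*n by omega]; ring
        omega
      · left; omega
      · right; omega
      · exfalso
        have hx2 := odd_sq_mod8 x (by omega)
        have hy2 := odd_sq_mod8 y (by omega)
        set A := x ^ 2; clear_value A
        set B := y ^ 2; clear_value B
        omega
    have hW2 := odd_sq_mod8 W hW
    have hxyeven : (x * y) % 2 = 0 := by
      rcases hparity with ⟨h1, _⟩ | ⟨_, h1⟩
      · obtain ⟨m, hm⟩ : ∃ m, x = 2 * m := ⟨x / 2, by omega⟩
        have : x * y = 2 * (m * y) := by rw [hm]; ring
        omega
      · obtain ⟨m, hm⟩ : ∃ m, y = 2 * m := ⟨y / 2, by omega⟩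
        have : x * y = 2 * (x * m) := by rw [hm]; ring
        omega
    rcases hparity with ⟨h1, h2⟩ | ⟨h1, h2⟩
    · have hx2 := even_sq_mod8 x h1
      have hy2 := odd_sq_mod8 y h2
      set A := W ^ 2; clear_value A
      set B := x ^ 2; clear_value B
      set C := y ^ 2; clear_value C
      set D := x * y; clear_value D
      omega
    · have hx2 := odd_sq_mod8 x h1
      have hy2 := even_sq_mod8 y h2
      set A := W ^ 2; clear_value A
      set B := x ^ 2; clear_value B
      set C := y ^ 2; clear_value C
      set D := x * y; clear_value D
      omega

lemma subdesc (N : ℕ)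
    (IH : ∀ q : ℤ, q.natAbs ≤ N → ∀ p Y : ℤ, IsCoprime p q → q ≠ 0 →
      Y ^ 2 ≠ p ^ 4 + 74 * p ^ 2 * q ^ 2 + 17 * q ^ 4)
    (g₁ g₂ κ W : ℤ)
    (hκ : κ ≠ 0) (hbound : κ.natAbs ≤ N)
    (hprod : g₁ * g₂ = 17 * κ ^ 4)
    (hsum : g₁ + g₂ = W ^ 2 - 74 * κ ^ 2)
    (hdodd : (g₂ - g₁) % 2 = 1)
    (hcop : IsCoprime g₁ g₂)
    (hW : W % 2 = 1) : False := by
  have h17 : Prime (17:ℤ) := by norm_num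
  have : (17:ℤ) ∣ g₁ * g₂ := by rw [hprod]; exact ⟨κ ^ 4, rfl⟩
  rcases h17.dvd_mul.mp this with hd | hd
  · exact subdesc_core N IH g₁ g₂ κ W hκ hbound hprod hsum hdodd hcop hW hd
  · exact subdesc_core N IH g₂ g₁ κ W hκ hbound (by rw [mul_comm]; exact hprod)
      (by rw [add_comm]; exact hsum) (by omega) hcop.symm hW hd

lemma half_of (x : ℤ) (h : x % 2 = 0) : ∃ g, x = 2 * g := ⟨x / 2, by omega⟩

lemma not_unit_int (r : ℕ) (hr : r.Prime) (h : IsUnit ((r:ℕ):ℤ)) : False := by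
  rw [Int.isUnit_iff] at h
  have := hr.two_le
  omega

set_option maxHeartbeats 2000000 in
lemma intA_aux : ∀ N : ℕ, ∀ q : ℤ, q.natAbs ≤ N → ∀ p Y : ℤ, IsCoprime p q → q ≠ 0 →
    Y ^ 2 ≠ p ^ 4 + 74 * p ^ 2 * q ^ 2 + 17 * q ^ 4 := by
  intro N
  induction N with
  | zero =>
    intro q hq p Y hcop hq0
    exfalso
    have : q.natAbs = 0 := by omega
    exact hq0 (Int.natAbs_eq_zero.mp this)
  | succ N IH =>
    intro q hqN p Y hcop hq0 hY
    -- parity of p and q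
    have hnotboth : ¬ (p % 2 = 0 ∧ q % 2 = 0) := by
      rintro ⟨h1, h2⟩
      exact not_unit_int 2 (by norm_num)
        (hcop.isUnit_of_dvd' (by omega) (by omega))
    rcases Int.even_or_odd p with ⟨mp, hmp⟩ | ⟨mp, hmp⟩ <;>
      rcases Int.even_or_odd q with ⟨mq, hmq⟩ | ⟨mq, hmq⟩
    · exact hnotboth ⟨by omega, by omega⟩
    · -- p even, q odd
      have hp2 : p % 2 = 0 := by omega
      have hq2 : q % 2 = 1 := by omega
      have hodd : (p ^ 2 + 37 * q ^ 2) % 2 = 1 := by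
        have h1 : p ^ 2 = 2 * (2 * mp ^ 2) := by rw [show p = 2*mp by omega]; ring
        have h2 := odd_sq_mod8 q hq2
        set a := p ^ 2; clear_value a
        set b := q ^ 2; clear_value b
        omega
      obtain ⟨u, v, hsum, hprod, hu, hv, hcuv⟩ := uv_exists p q Y hcop hq0 hY hodd
      have honeeven : u % 2 = 0 ∨ v % 2 = 0 := by omega
      have hKV : ∃ K V : ℤ, 0 < K ∧ 0 < V ∧ V % 2 = 1 ∧ IsCoprime K V ∧
          K * V = 13 * q ^ 2 ∧ p ^ 2 + 37 * q ^ 2 = 2 * K ^ 2 + V ^ 2 := by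
        rcases honeeven with he | he
        · obtain ⟨K, V, h1, h2, h3, h4, h5, h6, h7⟩ := KV_core q u v hu hv hcuv he hprod
          exact ⟨K, V, h3, h4, h5, h6, h7, by rw [← hsum, h1, h2]⟩
        · obtain ⟨K, V, h1, h2, h3, h4, h5, h6, h7⟩ :=
            KV_core q v u hv hu hcuv.symm he (by rw [mul_comm]; exact hprod)
          exact ⟨K, V, h3, h4, h5, h6, h7, by rw [← hsum, h1, h2]; ring⟩
      obtain ⟨K, V, hKpos, hVpos, hVodd, hcKV, hKV13, heq⟩ := hKV
      -- q odd ⇒ K odd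
      have hKodd : K % 2 = 1 := by
        rcases Int.even_or_odd K with ⟨m, hm⟩ | ⟨m, hm⟩
        · exfalso
          have h1 : K * V = 2 * (m * V) := by rw [show K = 2*m by omega]; ring
          have h2 := odd_sq_mod8 q hq2
          set a := K * V; clear_value a
          set b := q ^ 2; clear_value b
          omega
        · omega
      exact absurd heq (by intro h; exact case2_fin p q K V hp2 hq2 hKodd hVodd h)
    · -- p odd, q even
      have hp2 : p % 2 = 1 := by omega
      have hq2 : q % 2 = 0 := by omega
      have hodd : (p ^ 2 + 37 * q ^ 2) % 2 = 1 := by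
        have h1 : q ^ 2 = 2 * (2 * mq ^ 2) := by rw [show q = 2*mq by omega]; ring
        have h2 := odd_sq_mod8 p hp2
        set a := p ^ 2; clear_value a
        set b := q ^ 2; clear_value b
        omega
      obtain ⟨u, v, hsum, hprod, hu, hv, hcuv⟩ := uv_exists p q Y hcop hq0 hY hodd
      have honeeven : u % 2 = 0 ∨ v % 2 = 0 := by omega
      have hKV : ∃ K V : ℤ, 0 < K ∧ 0 < V ∧ V % 2 = 1 ∧ IsCoprime K V ∧
          K * V = 13 * q ^ 2 ∧ p ^ 2 + 37 * q ^ 2 = 2 * K ^ 2 + V ^ 2 := by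
        rcases honeeven with he | he
        · obtain ⟨K, V, h1, h2, h3, h4, h5, h6, h7⟩ := KV_core q u v hu hv hcuv he hprod
          exact ⟨K, V, h3, h4, h5, h6, h7, by rw [← hsum, h1, h2]⟩
        · obtain ⟨K, V, h1, h2, h3, h4, h5, h6, h7⟩ :=
            KV_core q v u hv hu hcuv.symm he (by rw [mul_comm]; exact hprod)
          exact ⟨K, V, h3, h4, h5, h6, h7, by rw [← hsum, h1, h2]; ring⟩
      obtain ⟨K, V, hKpos, hVpos, hVodd, hcKV, hKV13, heq⟩ := hKV
      -- q even ⇒ K even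
      have hKeven : K % 2 = 0 := by
        rcases Int.even_or_odd K with ⟨m, hm⟩ | ⟨m, hm⟩
        · omega
        · exfalso
          have h1 : q ^ 2 = 2 * (2 * mq ^ 2) := by rw [show q = 2*mq by omega]; ring
          have h2 : K * V % 2 = 1 := by
            rw [Int.mul_emod, show K % 2 = 1 by omega, hVodd]; rfl
          set a := K * V; clear_value a
          set b := q ^ 2; clear_value b
          omega
      -- 13 ∣ K*V
      have h13 : Prime (13:ℤ) := by norm_num
      have h13KV : (13:ℤ) ∣ K * V := by rw [hKV13]; exact ⟨q ^ 2, rfl⟩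
      have hq_ge2 : 2 ≤ q.natAbs := by
        rcases Int.natAbs_eq q with h | h <;> omega
      rcases h13.dvd_mul.mp h13KV with h13K | h13V
      · -- Branch 3a : 13 ∣ K
        obtain ⟨K', hK'⟩ := h13K
        have hKV' : K' * V = q ^ 2 := by
          have h2 : 13 * (K' * V) = 13 * q ^ 2 := by rw [← hKV13, hK']; ring
          linarith
        have hK'pos : 0 < K' := by
          rw [hK'] at hKpos; linarith
        have hcK'V : IsCoprime K' V :=
          IsCoprime.of_isCoprime_of_dvd_left hcKV ⟨13, by rw [hK']; ring⟩
        obtain ⟨l0, hl0⟩ := Int.sq_of_isCoprime hcK'V hKV'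
        obtain ⟨w0, hw0⟩ := Int.sq_of_isCoprime hcK'V.symm (by rw [mul_comm]; exact hKV')
        have hK'l : K' = l0 ^ 2 := by
          rcases hl0 with h' | h'
          · exact h'
          · exfalso; linarith [sq_nonneg l0]
        have hVw : V = w0 ^ 2 := by
          rcases hw0 with h' | h'
          · exact h'
          · exfalso; linarith [sq_nonneg w0]
        have hl0ne : l0 ≠ 0 := by rintro rfl; simp at hK'l; omega
        have hw0ne : w0 ≠ 0 := by rintro rfl; simp at hVw; omega
        have hwodd : w0 % 2 = 1 := by
          rcases Int.even_or_odd w0 with ⟨m, hm⟩ | ⟨m, hm⟩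
          · exfalso
            have hV4 : V = 2 * (2 * m ^ 2) := by rw [hVw, show w0 = 2*m by omega]; ring
            set a := m ^ 2; clear_value a
            omega
          · omega
        have hleven : l0 % 2 = 0 := by
          rcases Int.even_or_odd l0 with ⟨m, hm⟩ | ⟨m, hm⟩
          · omega
          · exfalso
            have h1 := odd_sq_mod8 l0 (by omega)
            have h2 : K = 13 * l0 ^ 2 := by rw [hK', hK'l]
            set a := l0 ^ 2; clear_value a
            omega
        obtain ⟨l₁, hl₁⟩ : ∃ l₁, l0 = 2 * l₁ := ⟨l0 / 2, by omega⟩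
        have hl₁ne : l₁ ≠ 0 := by rintro rfl; omega
        have hq2eq : q ^ 2 = (2 * l₁) ^ 2 * w0 ^ 2 := by
          rw [← hl₁, ← hK'l, ← hVw]; exact hKV'.symm
        -- main equation
        have hP : p ^ 2 = 5408 * l₁ ^ 4 - 148 * l₁ ^ 2 * w0 ^ 2 + w0 ^ 4 := by
          have h1 : K = 13 * (2 * l₁) ^ 2 := by rw [hK', hK'l, hl₁]
          have h2 : V = w0 ^ 2 := hVw
          rw [h1, h2] at heq
          linear_combination heq - 37 * hq2eq
        have hw2odd : w0 ^ 2 % 2 = 1 := by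
          have := odd_sq_mod8 w0 hwodd; omega
        obtain ⟨g₁, hg₁⟩ : ∃ g, w0 ^ 2 - 74 * l₁ ^ 2 - p = 2 * g := by
          apply half_of
          set a := w0 ^ 2; clear_value a
          set b := l₁ ^ 2; clear_value b
          omega
        set g₂ := g₁ + p with hg₂def
        have he₂ : w0 ^ 2 - 74 * l₁ ^ 2 + p = 2 * g₂ := by rw [hg₂def]; linarith [hg₁]
        have hgprod : g₁ * g₂ = 17 * l₁ ^ 4 := by
          have h4 : 4 * (g₁ * g₂) = 68 * l₁ ^ 4 := by
            linear_combination (-(w0 ^ 2 - 74 * l₁ ^ 2 + p)) * hg₁ - 2 * g₁ * he₂ - hP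
          linarith
        have hgsum : g₁ + g₂ = w0 ^ 2 - 74 * l₁ ^ 2 := by rw [hg₂def]; linarith [hg₁]
        have hgdiff : g₂ - g₁ = p := by rw [hg₂def]; ring
        -- coprime g₁ g₂
        have hcg : IsCoprime g₁ g₂ := by
          rw [Int.isCoprime_iff_gcd_eq_one]
          by_contra hne
          obtain ⟨r, hrp, hrd⟩ := Nat.exists_prime_and_dvd hne
          have hr1 : (r:ℤ) ∣ g₁ := dvd_trans (Int.natCast_dvd_natCast.mpr hrd) (Int.gcd_dvd_left _ _)
          have hr2 : (r:ℤ) ∣ g₂ := dvd_trans (Int.natCast_dvd_natCast.mpr hrd) (Int.gcd_dvd_right _ _)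
          have hrZ : Prime ((r:ℕ):ℤ) := Nat.prime_iff_prime_int.mp hrp
          have hrp' : (r:ℤ) ∣ p := by
            have := dvd_sub hr2 hr1
            rwa [hgdiff] at this
          have hrsum : (r:ℤ) ∣ w0 ^ 2 - 74 * l₁ ^ 2 := by
            have := dvd_add hr1 hr2
            rwa [hgsum] at this
          have hrprod : (r:ℤ) ∣ 17 * l₁ ^ 4 := by
            rw [← hgprod]; exact Dvd.dvd.mul_right hr1 g₂
          have hrl₁ : (r:ℤ) ∣ l₁ := by
            rcases hrZ.dvd_mul.mp hrprod with h17 | hl4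
            · -- r = 17
              have hr17 : r = 17 := by
                have : (r:ℕ) ∣ 17 := by exact_mod_cast Int.natCast_dvd_natCast.mp (by exact_mod_cast h17)
                exact (Nat.prime_dvd_prime_iff_eq hrp (by norm_num)).mp this
              subst hr17
              have h289 : (17:ℤ) * 17 ∣ g₁ * g₂ := mul_dvd_mul (by exact_mod_cast hr1) (by exact_mod_cast hr2)
              rw [hgprod] at h289
              obtain ⟨c, hc⟩ := h289
              have hd4 : (17:ℤ) ∣ l₁ ^ 4 := ⟨c, by linarith⟩
              have h17Z : Prime (17:ℤ) := by norm_num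
              have := h17Z.dvd_of_dvd_pow hd4
              exact_mod_cast this
            · exact hrZ.dvd_of_dvd_pow hl4
          have hrw : (r:ℤ) ∣ w0 := by
            have h1 : (r:ℤ) ∣ w0 ^ 2 := by
              have := dvd_add hrsum (Dvd.dvd.mul_left (Dvd.dvd.mul_right hrl₁ l₁) 74)
              rw [show w0 ^ 2 - 74 * l₁ ^ 2 + 74 * (l₁ * l₁) = w0 ^ 2 by ring] at this
              exact this
            exact hrZ.dvd_of_dvd_pow h1
          have hrq : (r:ℤ) ∣ q := by
            apply hrZ.dvd_of_dvd_pow (n := 2)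
            rw [hq2eq]
            exact Dvd.dvd.mul_left (dvd_pow hrw two_ne_zero) ((2*l₁)^2)
          exact not_unit_int r hrp (hcop.isUnit_of_dvd' hrp' hrq)
        -- bound and apply subdesc
        have hbnd : l₁.natAbs ≤ N := by
          have h1 : (2 * l₁) ^ 2 ≤ q ^ 2 := by
            have hw1 : (0:ℤ) < w0 ^ 2 := by positivity
            have hw2 : (1:ℤ) ≤ w0 ^ 2 := hw1
            calc (2 * l₁) ^ 2 = (2 * l₁) ^ 2 * 1 := by ring
              _ ≤ (2 * l₁) ^ 2 * w0 ^ 2 := by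
                  exact mul_le_mul_of_nonneg_left hw2 (sq_nonneg _)
              _ = q ^ 2 := hq2eq.symm
          have h2 := natAbs_le_of_sq_le h1
          rw [Int.natAbs_mul] at h2
          simp at h2
          omega
        have hdoddp : (g₂ - g₁) % 2 = 1 := by rw [hgdiff]; exact hp2
        exact subdesc N IH g₁ g₂ l₁ w0 hl₁ne hbnd hgprod hgsum hdoddp hcg hwodd
      · -- Branch 3b : 13 ∣ V
        obtain ⟨V', hV'⟩ := h13V
        have hKV' : K * V' = q ^ 2 := by
          have h2 : 13 * (K * V') = 13 * q ^ 2 := by rw [← hKV13, hV']; ring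
          linarith
        have hV'pos : 0 < V' := by rw [hV'] at hVpos; linarith
        have hcKV' : IsCoprime K V' :=
          IsCoprime.of_isCoprime_of_dvd_right hcKV ⟨13, by rw [hV']; ring⟩
        obtain ⟨k0, hk0⟩ := Int.sq_of_isCoprime hcKV' hKV'
        obtain ⟨w0, hw0⟩ := Int.sq_of_isCoprime hcKV'.symm (by rw [mul_comm]; exact hKV')
        have hKk : K = k0 ^ 2 := by
          rcases hk0 with h' | h'
          · exact h'
          · exfalso; linarith [sq_nonneg k0]
        have hVw : V' = w0 ^ 2 := by
          rcases hw0 with h' | h'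
          · exact h'
          · exfalso; linarith [sq_nonneg w0]
        have hk0ne : k0 ≠ 0 := by rintro rfl; simp at hKk; omega
        have hw0ne : w0 ≠ 0 := by rintro rfl; simp at hVw; omega
        have hwodd : w0 % 2 = 1 := by
          rcases Int.even_or_odd w0 with ⟨m, hm⟩ | ⟨m, hm⟩
          · exfalso
            have hV4 : V = 13 * (4 * m ^ 2) := by
              rw [hV', hVw, show w0 = 2*m by omega]; ring
            set a := m ^ 2; clear_value a
            omega
          · omega
        have hkeven : k0 % 2 = 0 := by
          rcases Int.even_or_odd k0 with ⟨m, hm⟩ | ⟨m, hm⟩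
          · omega
          · exfalso
            have h1 := odd_sq_mod8 k0 (by omega)
            set a := k0 ^ 2; clear_value a
            omega
        obtain ⟨κ, hκeq⟩ : ∃ κ, k0 = 2 * κ := ⟨k0 / 2, by omega⟩
        have hκne : κ ≠ 0 := by rintro rfl; omega
        have hq2eq : q ^ 2 = (2 * κ) ^ 2 * w0 ^ 2 := by
          rw [← hκeq, ← hKk, ← hVw]; exact hKV'.symm
        have hP : p ^ 2 = 32 * κ ^ 4 - 148 * κ ^ 2 * w0 ^ 2 + 169 * w0 ^ 4 := by
          have h1 : K = (2 * κ) ^ 2 := by rw [hKk, hκeq]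
          have h2 : V = 13 * w0 ^ 2 := by rw [hV', hVw]
          rw [h1, h2] at heq
          linear_combination heq - 37 * hq2eq
        have hw2odd : w0 ^ 2 % 2 = 1 := by
          have := odd_sq_mod8 w0 hwodd; omega
        obtain ⟨g₁, hg₁⟩ : ∃ g, 169 * w0 ^ 2 - 74 * κ ^ 2 - 13 * p = 2 * g := by
          apply half_of
          set a := w0 ^ 2; clear_value a
          set b := κ ^ 2; clear_value b
          omega
        set g₂ := g₁ + 13 * p with hg₂def
        have he₂ : 169 * w0 ^ 2 - 74 * κ ^ 2 + 13 * p = 2 * g₂ := by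
          rw [hg₂def]; linarith [hg₁]
        have hgprod : g₁ * g₂ = 17 * κ ^ 4 := by
          have h4 : 4 * (g₁ * g₂) = 68 * κ ^ 4 := by
            linear_combination (-(169 * w0 ^ 2 - 74 * κ ^ 2 + 13 * p)) * hg₁ - 2 * g₁ * he₂ - 169 * hP
          linarith
        have hgsum : g₁ + g₂ = 169 * w0 ^ 2 - 74 * κ ^ 2 := by rw [hg₂def]; linarith [hg₁]
        have hgdiff : g₂ - g₁ = 13 * p := by rw [hg₂def]; ring
        have hκq : κ ∣ q ∨ True := Or.inr trivial
        by_cases h13κ : (13:ℤ) ∣ κ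
        · -- kill : 13 ∣ p and 13 ∣ q
          obtain ⟨κ', hκ'⟩ := h13κ
          have h13g₁ : (13:ℤ) ∣ g₁ := by
            have hd : (13:ℤ) ∣ 2 * g₁ := by
              rw [← hg₁, hκ']
              exact ⟨13 * w0 ^ 2 - 74 * 13 * κ' ^ 2 - p, by ring⟩
            rcases h13.dvd_mul.mp hd with h' | h'
            · norm_num at h'
            · exact h'
          have h13g₂ : (13:ℤ) ∣ g₂ := by
            rw [hg₂def]
            exact dvd_add h13g₁ ⟨p, by ring⟩
          obtain ⟨h₁, hh₁⟩ := h13g₁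
          obtain ⟨h₂, hh₂⟩ := h13g₂
          have hprod169 : h₁ * h₂ = 17 * 169 * κ' ^ 4 := by
            have : 169 * (h₁ * h₂) = 169 * (17 * 169 * κ' ^ 4) := by
              have := hgprod
              rw [hh₁, hh₂, hκ'] at this
              linear_combination this
            linarith
          have hsum13 : h₁ + h₂ = 13 * (w0 ^ 2 - 74 * κ' ^ 2) := by
            have : 13 * (h₁ + h₂) = 13 * (13 * (w0 ^ 2 - 74 * κ' ^ 2)) := by
              have := hgsum
              rw [hh₁, hh₂, hκ'] at this
              linear_combination this
            linarith
          have h13h : (13:ℤ) ∣ h₁ ∧ (13:ℤ) ∣ h₂ := by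
            have hd : (13:ℤ) ∣ h₁ * h₂ := ⟨17 * 13 * κ' ^ 4, by rw [hprod169]; ring⟩
            have hs : (13:ℤ) ∣ h₁ + h₂ := ⟨w0 ^ 2 - 74 * κ' ^ 2, hsum13⟩
            rcases h13.dvd_mul.mp hd with h' | h'
            · exact ⟨h', (dvd_add_right h').mp hs⟩
            · exact ⟨by
                have := (dvd_add_left h').mp hs
                exact this, h'⟩
          have h13p : (13:ℤ) ∣ p := by
            have hd : 13 * (h₂ - h₁) = 13 * p := by
              have := hgdiff
              rw [hh₁, hh₂] at this
              linarith
            have : h₂ - h₁ = p := by linarith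
            rw [← this]
            exact dvd_sub h13h.2 h13h.1
          have h13q : (13:ℤ) ∣ q := by
            apply h13.dvd_of_dvd_pow (n := 2)
            rw [hq2eq, hκ']
            exact ⟨13 * 4 * κ' ^ 2 * w0 ^ 2, by ring⟩
          exact not_unit_int 13 (by norm_num) (hcop.isUnit_of_dvd' h13p h13q)
        · -- 13 ∤ κ : coprime and descend
          have hcg : IsCoprime g₁ g₂ := by
            rw [Int.isCoprime_iff_gcd_eq_one]
            by_contra hne
            obtain ⟨r, hrp, hrd⟩ := Nat.exists_prime_and_dvd hne
            have hr1 : (r:ℤ) ∣ g₁ := dvd_trans (Int.natCast_dvd_natCast.mpr hrd) (Int.gcd_dvd_left _ _)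
            have hr2 : (r:ℤ) ∣ g₂ := dvd_trans (Int.natCast_dvd_natCast.mpr hrd) (Int.gcd_dvd_right _ _)
            have hrZ : Prime ((r:ℕ):ℤ) := Nat.prime_iff_prime_int.mp hrp
            have hr13p : (r:ℤ) ∣ 13 * p := by
              have := dvd_sub hr2 hr1
              rwa [hgdiff] at this
            have hrsum : (r:ℤ) ∣ 169 * w0 ^ 2 - 74 * κ ^ 2 := by
              have := dvd_add hr1 hr2
              rwa [hgsum] at this
            have hrprod : (r:ℤ) ∣ 17 * κ ^ 4 := by
              rw [← hgprod]; exact Dvd.dvd.mul_right hr1 g₂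
            -- rule out r = 13
            have hrne13 : r ≠ 13 := by
              intro hr13
              subst hr13
              rcases hrZ.dvd_mul.mp hrprod with h' | h'
              · norm_num at h'
              · exact h13κ (by exact_mod_cast hrZ.dvd_of_dvd_pow h')
            have hrp' : (r:ℤ) ∣ p := by
              rcases hrZ.dvd_mul.mp hr13p with h' | h'
              · exfalso
                apply hrne13
                have : (r:ℕ) ∣ 13 := by exact_mod_cast Int.natCast_dvd_natCast.mp (by exact_mod_cast h')
                exact (Nat.prime_dvd_prime_iff_eq hrp (by norm_num)).mp this
              · exact h'
            have hrκ : (r:ℤ) ∣ κ := by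
              rcases hrZ.dvd_mul.mp hrprod with h17 | hl4
              · have hr17 : r = 17 := by
                  have : (r:ℕ) ∣ 17 := by exact_mod_cast Int.natCast_dvd_natCast.mp (by exact_mod_cast h17)
                  exact (Nat.prime_dvd_prime_iff_eq hrp (by norm_num)).mp this
                subst hr17
                have h289 : (17:ℤ) * 17 ∣ g₁ * g₂ := mul_dvd_mul (by exact_mod_cast hr1) (by exact_mod_cast hr2)
                rw [hgprod] at h289
                obtain ⟨c, hc⟩ := h289
                have hd4 : (17:ℤ) ∣ κ ^ 4 := ⟨c, by linarith⟩
                have h17Z : Prime (17:ℤ) := by norm_num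
                have := h17Z.dvd_of_dvd_pow hd4
                exact_mod_cast this
              · exact hrZ.dvd_of_dvd_pow hl4
            have hrw : (r:ℤ) ∣ w0 := by
              have h1 : (r:ℤ) ∣ 169 * w0 ^ 2 := by
                have := dvd_add hrsum (Dvd.dvd.mul_left (Dvd.dvd.mul_right hrκ κ) 74)
                rw [show 169 * w0 ^ 2 - 74 * κ ^ 2 + 74 * (κ * κ) = 169 * w0 ^ 2 by ring] at this
                exact this
              rcases hrZ.dvd_mul.mp h1 with h' | h'
              · exfalso
                apply hrne13
                have h169 : (r:ℤ) ∣ 13 * 13 := by rw [show (169:ℤ) = 13 * 13 by norm_num] at h'; exact h'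
                rcases hrZ.dvd_mul.mp h169 with h'' | h'' <;>
                · have : (r:ℕ) ∣ 13 := by exact_mod_cast Int.natCast_dvd_natCast.mp (by exact_mod_cast h'')
                  exact (Nat.prime_dvd_prime_iff_eq hrp (by norm_num)).mp this
              · exact hrZ.dvd_of_dvd_pow h'
            have hrq : (r:ℤ) ∣ q := by
              apply hrZ.dvd_of_dvd_pow (n := 2)
              rw [hq2eq]
              exact Dvd.dvd.mul_left (dvd_pow hrw two_ne_zero) ((2*κ)^2)
            exact not_unit_int r hrp (hcop.isUnit_of_dvd' hrp' hrq)
          have hbnd : κ.natAbs ≤ N := by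
            have h1 : (2 * κ) ^ 2 ≤ q ^ 2 := by
              have hw1 : (0:ℤ) < w0 ^ 2 := by positivity
              have hw2 : (1:ℤ) ≤ w0 ^ 2 := hw1
              calc (2 * κ) ^ 2 = (2 * κ) ^ 2 * 1 := by ring
                _ ≤ (2 * κ) ^ 2 * w0 ^ 2 := by
                    exact mul_le_mul_of_nonneg_left hw2 (sq_nonneg _)
                _ = q ^ 2 := hq2eq.symm
            have h2 := natAbs_le_of_sq_le h1
            rw [Int.natAbs_mul] at h2
            simp at h2
            omega
          have hgsum' : g₁ + g₂ = (13 * w0) ^ 2 - 74 * κ ^ 2 := by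
            rw [hgsum]; ring
          have hW13 : (13 * w0) % 2 = 1 := by omega
          have hdodd13 : (g₂ - g₁) % 2 = 1 := by rw [hgdiff]; omega
          exact subdesc N IH g₁ g₂ κ (13 * w0) hκne hbnd hgprod hgsum' hdodd13 hcg hW13
    · -- p odd, q odd
      exact case_oddodd p q Y (by omega) (by omega) hY


lemma intA (p q Y : ℤ) (hcop : IsCoprime p q) (hq0 : q ≠ 0) :
    Y ^ 2 ≠ p ^ 4 + 74 * p ^ 2 * q ^ 2 + 17 * q ^ 4 :=
  intA_aux q.natAbs q le_rfl p Y hcop hq0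

lemma ratA (y t : ℚ) : y ^ 2 ≠ t ^ 4 + 74 * t ^ 2 + 17 :=
  ratA_of_intA (fun p q Y hc hq => intA p q Y hc hq) y t


open Polynomial

lemma t_sq_ne_two (t : ℚ) : t ^ 2 ≠ 2 := by
  intro h
  have h0 : ((t.den:ℚ)) ≠ 0 := by exact_mod_cast t.den_nz
  have ht : (t.num : ℚ) = t * t.den := by exact (Rat.mul_den_eq_num t).symm
  have key : 2 * (t.den:ℤ) ^ 2 - t.num ^ 2 = 0 := by
    have : ((2 * (t.den:ℤ) ^ 2 - t.num ^ 2 : ℤ) : ℚ) = 0 := by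
      push_cast
      rw [ht]
      linear_combination ((t.den:ℚ))^2 * h.symm
    exact_mod_cast this
  obtain ⟨h1, h2⟩ := zmod13_two t.num (t.den:ℤ) (by rw [key]; exact dvd_zero _)
  exact coprime_13_kill h1 h2 t.reduced

lemma quad_form_s3 (f : ℚ[X]) (h : f.natDegree ≤ 2) :
    f = C (f.coeff 2) * X ^ 2 + C (f.coeff 1) * X + C (f.coeff 0) := by
  apply Polynomial.ext
  intro k
  match k with
  | 0 => simp
  | 1 => simp
  | 2 => simp [coeff_X]
  | (k+3) =>
    rw [Polynomial.coeff_eq_zero_of_natDegree_lt (by omega)]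
    simp [coeff_X, Polynomial.coeff_C]

lemma coeff_eq5 (A4 A3 A2 A1 A0 B4 B3 B2 B1 B0 : ℚ)
    (h : C A4 * X ^ 4 + C A3 * X ^ 3 + C A2 * X ^ 2 + C A1 * X + C A0
       = C B4 * X ^ 4 + C B3 * X ^ 3 + C B2 * X ^ 2 + C B1 * X + C B0) :
    A4 = B4 ∧ A3 = B3 ∧ A2 = B2 ∧ A1 = B1 ∧ A0 = B0 := by
  refine ⟨?_, ?_, ?_, ?_, ?_⟩
  · have := congrArg (fun p => Polynomial.coeff p 4) h
    simpa [coeff_X, Polynomial.coeff_C] using this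
  · have := congrArg (fun p => Polynomial.coeff p 3) h
    simpa [coeff_X, Polynomial.coeff_C] using this
  · have := congrArg (fun p => Polynomial.coeff p 2) h
    simpa [coeff_X, Polynomial.coeff_C] using this
  · have := congrArg (fun p => Polynomial.coeff p 1) h
    simpa [coeff_X, Polynomial.coeff_C] using this
  · have := congrArg (fun p => Polynomial.coeff p 0) h
    simpa [coeff_X, Polynomial.coeff_C] using this

open Polynomial in
theorem stmt_3 (t : ℚ) :
    Irreducible (C (2 - t ^ 2) * X ^ 4 + C (3 + 5 * t ^ 2) * X ^ 2 + C (-6 * t ^ 2 - 1)) := by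
  have hs : (2 - t ^ 2) ≠ 0 := fun h => t_sq_ne_two t (by linarith)
  set P : ℚ[X] := C (2 - t ^ 2) * X ^ 4 + C (3 + 5 * t ^ 2) * X ^ 2 + C (-6 * t ^ 2 - 1) with hPdef
  have hdeg : P.natDegree = 4 := by
    rw [hPdef]
    compute_degree!
  have hP0 : P ≠ 0 := by
    intro h
    rw [h] at hdeg
    simp at hdeg
  constructor
  · intro hu
    have := Polynomial.natDegree_eq_zero_of_isUnit hu
    omega
  · intro f g hfg
    by_contra hcon
    push_neg at hcon
    obtain ⟨hf, hg⟩ := hcon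
    have hf0 : f ≠ 0 := by rintro rfl; rw [zero_mul] at hfg; exact hP0 hfg
    have hg0 : g ≠ 0 := by rintro rfl; rw [mul_zero] at hfg; exact hP0 hfg
    have hsum : f.natDegree + g.natDegree = 4 := by
      rw [← Polynomial.natDegree_mul hf0 hg0, ← hfg, hdeg]
    have hfpos : 1 ≤ f.natDegree := by
      by_contra h
      have h0 : f.natDegree = 0 := by omega
      obtain ⟨a, ha⟩ := Polynomial.natDegree_eq_zero.mp h0
      exact hf (ha ▸ Polynomial.isUnit_C.mpr ((Polynomial.C_ne_zero.mp (ha ▸ hf0)).isUnit))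
    have hgpos : 1 ≤ g.natDegree := by
      by_contra h
      have h0 : g.natDegree = 0 := by omega
      obtain ⟨a, ha⟩ := Polynomial.natDegree_eq_zero.mp h0
      exact hg (ha ▸ Polynomial.isUnit_C.mpr ((Polynomial.C_ne_zero.mp (ha ▸ hg0)).isUnit))
    -- helper : a root of P gives a contradiction
    have hroot : ∀ z : ℚ, P.eval z ≠ 0 := by
      intro z hz
      have heval : (2 - t ^ 2) * z ^ 4 + (3 + 5 * t ^ 2) * z ^ 2 + (-6 * t ^ 2 - 1) = 0 := by
        rw [hPdef] at hz
        simpa using hz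
      apply ratA (2 * (2 - t ^ 2) * z ^ 2 + (3 + 5 * t ^ 2)) t
      linear_combination 4 * (2 - t ^ 2) * heval
    -- degree-1 factor case
    have hdeg1 : ∀ h : ℚ[X], h ∣ P → h.natDegree = 1 → False := by
      intro h hdvd h1
      obtain ⟨a, b, hab⟩ := Polynomial.exists_eq_X_add_C_of_natDegree_le_one (le_of_eq h1)
      have ha : a ≠ 0 := by
        intro h0
        rw [h0] at hab
        rw [hab] at h1
        simp at h1
      have hz : Polynomial.eval (-b / a) h = 0 := by
        rw [hab]
        simp only [Polynomial.eval_add, Polynomial.eval_mul, Polynomial.eval_C, Polynomial.eval_X]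
        field_simp
        ring
      have : P.eval (-b / a) = 0 := by
        obtain ⟨k, hk⟩ := hdvd
        rw [hk, Polynomial.eval_mul, hz, zero_mul]
      exact hroot _ this
    rcases (by omega : f.natDegree = 1 ∨ g.natDegree = 1 ∨
        (f.natDegree = 2 ∧ g.natDegree = 2)) with h1 | h1 | ⟨h2f, h2g⟩
    · exact hdeg1 f ⟨g, hfg⟩ h1
    · exact hdeg1 g ⟨f, by rw [hfg]; ring⟩ h1
    · -- quadratic times quadratic
      set a := f.coeff 2
      set b := f.coeff 1
      set c := f.coeff 0
      set a' := g.coeff 2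
      set b' := g.coeff 1
      set c' := g.coeff 0
      have hfform : f = C a * X ^ 2 + C b * X + C c := quad_form_s3 f (le_of_eq h2f)
      have hgform : g = C a' * X ^ 2 + C b' * X + C c' := quad_form_s3 g (le_of_eq h2g)
      have hexp : P = C (a * a') * X ^ 4 + C (a * b' + b * a') * X ^ 3
          + C (a * c' + b * b' + c * a') * X ^ 2 + C (b * c' + c * b') * X + C (c * c') := by
        rw [hfg, hfform, hgform]
        simp only [map_mul, map_add]
        ring
      have hPform : P = C (2 - t ^ 2) * X ^ 4 + C 0 * X ^ 3 + C (3 + 5 * t ^ 2) * X ^ 2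
          + C 0 * X + C (-6 * t ^ 2 - 1) := by
        rw [hPdef]
        simp
      obtain ⟨e4, e3, e2, e1, e0⟩ := coeff_eq5 _ _ _ _ _ _ _ _ _ _ (hPform.symm.trans hexp)
      -- e4 : 2 - t^2 = a*a', e3 : 0 = a*b' + b*a', e2 : 3+5t^2 = ..., e1 : 0 = b*c' + c*b',
      -- e0 : -6t^2-1 = c*c'
      have ha0 : a ≠ 0 := by
        intro h0
        rw [h0, zero_mul] at e4
        exact hs e4
      by_cases hb : b = 0
      · -- even factorization : discriminant is a square
        have hb' : b' = 0 := by
          rw [hb] at e3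
          simp at e3
          rcases e3 with h' | h'
          · exact absurd h' ha0
          · exact h'
        apply ratA (a * c' - c * a') t
        have he2' : a * c' + c * a' = 3 + 5 * t ^ 2 := by
          rw [hb, hb'] at e2
          linear_combination -e2
        have he4' : a * a' = 2 - t ^ 2 := e4.symm
        have he0' : c * c' = -6 * t ^ 2 - 1 := e0.symm
        linear_combination (a * c' + c * a' + (3 + 5 * t ^ 2)) * he2' - 4 * (c * c') * he4'
          - 4 * (2 - t ^ 2) * he0'
      · -- b ≠ 0 : non-even factorization
        have hac : a * c' = c * a' := by
          have hkey : b * (a * c' - c * a') = 0 := by linear_combination -a * e1 + c * e3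
          rcases mul_eq_zero.mp hkey with h' | h'
          · exact absurd h' hb
          · linarith [h']
        have key : (2 - t ^ 2) * c ^ 2 = (-6 * t ^ 2 - 1) * a ^ 2 := by
          linear_combination c ^ 2 * e4 - a * c * hac - a ^ 2 * e0
        apply ratB t (c / a)
        have ha2 : a ^ 2 ≠ 0 := pow_ne_zero 2 ha0
        field_simp
        linear_combination -key
end

section
/- There are no rational numbers t, w with w² = (-6t² - 1)(2 - t²). -/
lemma zmod13_key_s5 : ∀ x y z : ZMod 13,
    z ^ 2 = (6 * x ^ 2 + y ^ 2) * (x ^ 2 - 2 * y ^ 2) → x = 0 ∧ y = 0 := by decide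

theorem stmt_5 : ¬∃ t w : ℚ, w ^ 2 = (-6 * t ^ 2 - 1) * (2 - t ^ 2) := by
  rintro ⟨t, w, h⟩
  set a : ℤ := t.num with ha
  set b : ℤ := (t.den : ℤ) with hb
  have hbq : (t.den : ℚ) ≠ 0 := by exact_mod_cast t.den_ne_zero
  have htab : (t : ℚ) = (a : ℚ) / (b : ℚ) := by
    rw [ha, hb]; push_cast; exact (Rat.num_div_den t).symm
  set c : ℚ := w * (t.den : ℚ) ^ 2 with hc
  have hbq' : (b : ℚ) ≠ 0 := by rw [hb]; push_cast; exact_mod_cast t.den_ne_zero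
  have hceq : c ^ 2 = (((6 * a ^ 2 + b ^ 2) * (a ^ 2 - 2 * b ^ 2) : ℤ) : ℚ) := by
    rw [hc, hb]
    push_cast
    rw [htab] at h
    field_simp at h ⊢
    rw [hb] at *
    push_cast at h ⊢
    nlinarith [h]
  have hden : c.den = 1 := by
    have h2 : (c ^ 2).den = 1 := by rw [hceq]; exact Rat.den_intCast _
    have h3 : (c ^ 2).den = c.den ^ 2 := by
      rw [pow_two, pow_two]
      exact Rat.mul_self_den c
    rw [h2] at h3
    nlinarith [c.den_pos, h3.symm]
  have hcint : c = (c.num : ℚ) := by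
    conv_lhs => rw [← Rat.num_div_den c]
    rw [hden]; simp
  set m : ℤ := c.num
  have hint : m ^ 2 = (6 * a ^ 2 + b ^ 2) * (a ^ 2 - 2 * b ^ 2) := by
    rw [hcint] at hceq
    exact_mod_cast hceq
  have hmod : ((m : ZMod 13)) ^ 2 =
      (6 * (a : ZMod 13) ^ 2 + (b : ZMod 13) ^ 2) * ((a : ZMod 13) ^ 2 - 2 * (b : ZMod 13) ^ 2) := by
    have := congrArg (fun n : ℤ => (n : ZMod 13)) hint
    push_cast at this
    exact this
  obtain ⟨hx, hy⟩ := zmod13_key_s5 _ _ _ hmod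
  have hda : (13 : ℤ) ∣ a := by
    rwa [ZMod.intCast_zmod_eq_zero_iff_dvd] at hx
  have hdb : (13 : ℤ) ∣ b := by
    rwa [ZMod.intCast_zmod_eq_zero_iff_dvd] at hy
  have hcop : a.gcd b = 1 := by
    rw [ha, hb]; exact_mod_cast t.reduced
  have : (13 : ℤ) ∣ (a.gcd b : ℤ) := Int.dvd_coe_gcd hda hdb
  rw [hcop] at this
  norm_num at this
end

section
/- For all real numbers a, b, not both zero, there exists a real number x such that (2b² - a²)x⁴ + (3b² + 5a²)x² + (-6a² - b²) > 0. -/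
theorem stmt_6 (a b : ℝ) (hab : ¬(a = 0 ∧ b = 0)) :
    ∃ x : ℝ, (2 * b ^ 2 - a ^ 2) * x ^ 4 + (3 * b ^ 2 + 5 * a ^ 2) * x ^ 2
      + (-6 * a ^ 2 - b ^ 2) > 0 := by
  use 3/2
  rcases not_and_or.mp hab with h | h
  · nlinarith [pow_pos (abs_pos.mpr h) 2, sq_abs a, sq_nonneg b]
  · nlinarith [pow_pos (abs_pos.mpr h) 2, sq_abs b, sq_nonneg a]
end

section
/- Let p ≥ 5 be a prime and a, b coprime integers. Then there exist x, y, z ∈ ℚ_p with y² + z² = a²(x² - 2)(3 - x²) + b²(2x⁴ + 3x² - 1). -/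
open Polynomial

lemma zmod13_aux : ∀ x y : ZMod 13, x ^ 2 = 2 * y ^ 2 → x = 0 ∧ y = 0 := by decide

lemma exists_padic_sqrt {p : ℕ} [Fact p.Prime] (hp : p ≠ 2) (c y₀ : ℤ)
    (h1 : ¬ ((p : ℤ) ∣ y₀)) (h2 : (p : ℤ) ∣ (y₀ ^ 2 - c)) :
    ∃ y : ℚ_[p], y ^ 2 = (c : ℚ_[p]) := by
  set F : Polynomial ℤ_[p] := X ^ 2 - C (c : ℤ_[p]) with hF
  set a : ℤ_[p] := (y₀ : ℤ_[p]) with ha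
  have hFa : F.eval a = ((y₀ ^ 2 - c : ℤ) : ℤ_[p]) := by
    simp [hF, ha]
  have hderiv : F.derivative.eval a = 2 * a := by
    simp [hF]
    left; norm_num
  have hnorm2 : ‖(2 : ℤ_[p])‖ = 1 := by
    have hd : ¬ ((p : ℤ) ∣ 2) := by
      intro h
      have : p ∣ 2 := by exact_mod_cast h
      have := (Nat.prime_dvd_prime_iff_eq Fact.out Nat.prime_two).mp this
      exact hp this
    have h2' : ¬ ‖((2 : ℤ) : ℤ_[p])‖ < 1 := by
      rw [PadicInt.norm_int_lt_one_iff_dvd]; exact hd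
    have hle := PadicInt.norm_le_one ((2 : ℤ) : ℤ_[p])
    push_cast at h2' hle ⊢
    linarith [lt_or_ge (‖(2 : ℤ_[p])‖) 1, le_antisymm hle]
  have hnorma : ‖a‖ = 1 := by
    have h2' : ¬ ‖a‖ < 1 := by
      rw [ha, PadicInt.norm_int_lt_one_iff_dvd]; exact h1
    exact le_antisymm (PadicInt.norm_le_one a) (not_lt.mp h2')
  have hnorm : ‖F.eval a‖ < ‖F.derivative.eval a‖ ^ 2 := by
    rw [hFa, hderiv, norm_mul, hnorm2, hnorma]
    have h11 : ((1:ℝ) * 1) ^ 2 = 1 := by norm_num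
    rw [h11, PadicInt.norm_int_lt_one_iff_dvd]
    exact h2
  obtain ⟨z, hz, -, -, -⟩ := hensels_lemma hnorm
  refine ⟨(z : ℚ_[p]), ?_⟩
  have : z ^ 2 = (c : ℤ_[p]) := by
    have := hz
    simp [hF] at this
    linear_combination (norm := ring_nf) this
  calc (z : ℚ_[p]) ^ 2 = ((z ^ 2 : ℤ_[p]) : ℚ_[p]) := by push_cast; ring
    _ = (c : ℚ_[p]) := by rw [this]; push_cast; ring

theorem stmt_13 (p : ℕ) [Fact p.Prime] (h5 : 5 ≤ p) (a b : ℤ) (hab : IsCoprime a b) :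
    ∃ x y z : ℚ_[p], y ^ 2 + z ^ 2
      = (a : ℚ_[p]) ^ 2 * (x ^ 2 - 2) * (3 - x ^ 2)
        + (b : ℚ_[p]) ^ 2 * (2 * x ^ 4 + 3 * x ^ 2 - 1) := by
  obtain ⟨u, v, huv⟩ := hab
  set α : ZMod p := (a : ZMod p) with hα
  set β : ZMod p := (b : ZMod p) with hβ
  have huv' : (u : ZMod p) * α + (v : ZMod p) * β = 1 := by
    have : ((u * a + v * b : ℤ) : ZMod p) = ((1 : ℤ) : ZMod p) := by rw [huv]
    push_cast at this
    exact this
  have hne : ¬ (α = 0 ∧ β = 0) := by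
    rintro ⟨h1, h2⟩
    rw [h1, h2] at huv'
    simp at huv'
  have hp2 : p ≠ 2 := by omega
  -- find t with N t not 0 mod p
  have key : ∃ t : ℤ,
      ((a ^ 2 * (t ^ 2 - 2) * (3 - t ^ 2) + b ^ 2 * (2 * t ^ 4 + 3 * t ^ 2 - 1) : ℤ) : ZMod p) ≠ 0 := by
    by_contra hcon
    push_neg at hcon
    have e0 : -6 * α ^ 2 - β ^ 2 = 0 := by
      have := hcon 0
      push_cast at this
      linear_combination this
    have e1 : -2 * α ^ 2 + 4 * β ^ 2 = 0 := by
      have := hcon 1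
      push_cast at this
      linear_combination this
    have h2ne : (2 : ZMod p) ≠ 0 := by
      intro h
      have : ((2 : ℕ) : ZMod p) = 0 := by exact_mod_cast h
      have := (ZMod.natCast_eq_zero_iff 2 p).mp this
      have := Nat.le_of_dvd (by norm_num) this
      omega
    have hα2 : α ^ 2 = 2 * β ^ 2 := by
      have h2 : (2 : ZMod p) * α ^ 2 = (2 : ZMod p) * (2 * β ^ 2) := by linear_combination -e1
      exact mul_left_cancel₀ h2ne h2
    have h13 : (13 : ZMod p) * β ^ 2 = 0 := by linear_combination -e0 - 6 * hα2
    rcases mul_eq_zero.mp h13 with h13' | hβ2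
    · have hdvd : p ∣ 13 := by
        have : ((13 : ℕ) : ZMod p) = 0 := by exact_mod_cast h13'
        exact (ZMod.natCast_eq_zero_iff 13 p).mp this
      have hp13 : p = 13 := (Nat.prime_dvd_prime_iff_eq Fact.out (by norm_num)).mp hdvd
      subst hp13
      exact hne (zmod13_aux α β hα2)
    · have hb : β = 0 := by
        exact pow_eq_zero_iff (by norm_num) |>.mp hβ2
      have ha' : α = 0 := by
        have : α ^ 2 = 0 := by rw [hα2, hb]; ring
        exact pow_eq_zero_iff (by norm_num) |>.mp this
      exact hne ⟨ha', hb⟩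
  obtain ⟨t, ht⟩ := key
  set c : ℤ := a ^ 2 * (t ^ 2 - 2) * (3 - t ^ 2) + b ^ 2 * (2 * t ^ 4 + 3 * t ^ 2 - 1) with hc
  -- sum of two squares mod p with nonzero first coordinate
  obtain ⟨y₀, z₀, hyz, hy₀⟩ : ∃ y₀ z₀ : ZMod p, y₀ ^ 2 + z₀ ^ 2 = (c : ZMod p) ∧ y₀ ≠ 0 := by
    obtain ⟨y₀, z₀, hyz⟩ := ZMod.sq_add_sq p ((c : ℤ) : ZMod p)
    by_cases hy : y₀ = 0
    · refine ⟨z₀, y₀, by rw [add_comm]; exact hyz, ?_⟩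
      intro hz
      rw [hy, hz] at hyz
      simp at hyz
      exact ht hyz.symm
    · exact ⟨y₀, z₀, hyz, hy⟩
  set Y : ℤ := (y₀.val : ℤ) with hY
  set Z : ℤ := (z₀.val : ℤ) with hZ
  have hYcast : ((Y : ℤ) : ZMod p) = y₀ := by
    rw [hY]; push_cast; simp [ZMod.natCast_val, ZMod.cast_id]
  have hZcast : ((Z : ℤ) : ZMod p) = z₀ := by
    rw [hZ]; push_cast; simp [ZMod.natCast_val, ZMod.cast_id]
  have h1 : ¬ ((p : ℤ) ∣ Y) := by
    intro h
    exact hy₀ (by rw [← hYcast]; exact (ZMod.intCast_zmod_eq_zero_iff_dvd Y p).mpr h)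
  have h2 : (p : ℤ) ∣ (Y ^ 2 - (c - Z ^ 2)) := by
    apply (ZMod.intCast_zmod_eq_zero_iff_dvd _ p).mp
    push_cast
    rw [hYcast, hZcast]
    linear_combination hyz
  obtain ⟨y, hy⟩ := exists_padic_sqrt hp2 (c - Z ^ 2) Y h1 h2
  refine ⟨(t : ℚ_[p]), y, (Z : ℚ_[p]), ?_⟩
  rw [hy]
  push_cast [hc]
  ring
end

section
/- Let u, v be coprime integers, a = 6u² - v², b = 12v². Then there exist x, y, z ∈ ℚ₃ with y² + z² = (2b² - a²)x⁴ + (3b² + 5a²)x² - (6a² + b²). In particular, for n sufficiently large, x = 3⁻ⁿ gives P(x) of even 3-adic valuation, hence representable by y² + z² over ℚ₃. -/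
open Polynomial

lemma norm_two_padic3 : ‖((2 : ℤ) : ℤ_[3])‖ = 1 := by
  have hle : ‖((2:ℤ) : ℤ_[3])‖ ≤ 1 := PadicInt.norm_le_one _
  rcases lt_or_eq_of_le hle with hl | he
  · exfalso
    have := (PadicInt.norm_int_lt_one_iff_dvd (p := 3) 2).1 hl
    omega
  · exact he

lemma sq_of_close_one (c : ℤ_[3]) (h : ‖c - 1‖ < 1) : ∃ s : ℤ_[3], s ^ 2 = c := by
  have hnorm : ‖(X ^ 2 - C c : ℤ_[3][X]).eval 1‖ <
      ‖(X ^ 2 - C c : ℤ_[3][X]).derivative.eval 1‖ ^ 2 := by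
    have hd : (X ^ 2 - C c : ℤ_[3][X]).derivative.eval 1 = 2 := by
      simp [derivative_sub, derivative_pow]
    rw [hd]
    have h2 : ‖(2 : ℤ_[3])‖ = 1 := by
      have := norm_two_padic3; push_cast at this; exact this
    rw [h2]
    simpa [← norm_neg (1 - c), neg_sub] using h
  obtain ⟨z, hz, -⟩ := hensels_lemma hnorm
  refine ⟨z, ?_⟩
  have := hz
  rw [Polynomial.coe_aeval_eq_eval] at this
  simp only [Polynomial.eval_sub, Polynomial.eval_pow, Polynomial.eval_X,
    Polynomial.eval_C] at this
  exact sub_eq_zero.mp this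

lemma sq_of_int (c : ℤ) (h : (3 : ℤ) ∣ (c - 1)) : ∃ s : ℤ_[3], s ^ 2 = (c : ℤ_[3]) := by
  apply sq_of_close_one
  have : ((c : ℤ_[3]) - 1) = (((c - 1 : ℤ)) : ℤ_[3]) := by push_cast; ring
  rw [this]
  exact (PadicInt.norm_int_lt_one_iff_dvd (p := 3) _).2 (by exact_mod_cast h)

theorem stmt_18 (u v : ℤ) (huv : IsCoprime u v) (a b : ℤ)
    (ha : a = 6 * u ^ 2 - v ^ 2) (hb : b = 12 * v ^ 2) :
    ∃ x y z : ℚ_[3], y ^ 2 + z ^ 2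
      = (2 * (b : ℚ_[3]) ^ 2 - (a : ℚ_[3]) ^ 2) * x ^ 4
        + (3 * (b : ℚ_[3]) ^ 2 + 5 * (a : ℚ_[3]) ^ 2) * x ^ 2
        - (6 * (a : ℚ_[3]) ^ 2 + (b : ℚ_[3]) ^ 2) := by
  by_cases hv : (3 : ℤ) ∣ v
  · -- 3 ∣ v, so 3 ∤ u
    obtain ⟨w, rfl⟩ := hv
    have hu : ¬ (3 : ℤ) ∣ u := by
      intro ⟨u', hu'⟩
      obtain ⟨x, y, hxy⟩ := huv
      have : (3 : ℤ) ∣ 1 := ⟨x * u' + y * w, by linear_combination x * hu' - hxy⟩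
      norm_num at this
    set c : ℤ := 4 * 1296 * w ^ 4 - 2 * (2 * u ^ 2 - 3 * w ^ 2) ^ 2 with hc
    have hdvd : (3 : ℤ) ∣ (c - 1) := by
      have h0 : ((u : ZMod 3)) ≠ 0 := by
        rwa [Ne, ZMod.intCast_zmod_eq_zero_iff_dvd]
      have hcast : ((c - 1 : ℤ) : ZMod 3) = 0 := by
        push_cast [hc]
        revert h0
        generalize ((u : ZMod 3)) = x
        generalize ((w : ZMod 3)) = y
        revert x y
        decide
      exact_mod_cast (ZMod.intCast_zmod_eq_zero_iff_dvd _ 3).1 hcast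
    obtain ⟨s, hs⟩ := sq_of_int c hdvd
    refine ⟨1, 3 * (s : ℚ_[3]), 0, ?_⟩
    have hs' : ((s : ℚ_[3])) ^ 2 = (c : ℚ_[3]) := by
      exact_mod_cast congrArg (fun t : ℤ_[3] => (t : ℚ_[3])) hs
    have : (3 * (s : ℚ_[3])) ^ 2 = 9 * (c : ℚ_[3]) := by rw [mul_pow, hs']; ring
    rw [this, ha, hb]
    push_cast [hc]
    ring
  · set c : ℤ := 4 * b ^ 2 - 2 * a ^ 2 with hc
    have hdvd : (3 : ℤ) ∣ (c - 1) := by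
      have h0 : ((v : ZMod 3)) ≠ 0 := by
        rwa [Ne, ZMod.intCast_zmod_eq_zero_iff_dvd]
      have hcast : ((c - 1 : ℤ) : ZMod 3) = 0 := by
        push_cast [hc, ha, hb]
        revert h0
        generalize ((v : ZMod 3)) = x
        generalize ((u : ZMod 3)) = y
        revert x y
        decide
      exact_mod_cast (ZMod.intCast_zmod_eq_zero_iff_dvd _ 3).1 hcast
    obtain ⟨s, hs⟩ := sq_of_int c hdvd
    refine ⟨1, (s : ℚ_[3]), 0, ?_⟩
    have hs' : ((s : ℚ_[3])) ^ 2 = (c : ℚ_[3]) := by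
      exact_mod_cast congrArg (fun t : ℤ_[3] => (t : ℚ_[3])) hs
    rw [hs']
    push_cast [hc]
    ring
end
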